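/- arXiv:2210.16832 — 7 statements merged into one kernel-verified Lean document; each statement's English description precedes it below -/
import Mathlib

section
/- For every s ∈ μ_r, every v ∈ A_1, and every w ∈ A_r, the diamond product satisfies v z ⋄_s w = v ⋄_s (w z) = (v ⋄_s w) z, where z = x + y. -/
open FreeAlgebra

/-- Alphabet of `A_1 = ℚ⟨x,y⟩`. -/
inductive LetA : Type | x : LetA | y : LetA

/-- Alphabet of `A_r = ℚ⟨x, y_s : s ∈ μ_r⟩`; the group `G` plays the role of `μ_r`. -/
inductive LetR (G : Type) : Type | x : LetR G | y : G → LetR G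

/-- `A_1 = ℚ⟨x, y⟩`. -/
abbrev A1 : Type := FreeAlgebra ℚ LetA

/-- `A_r = ℚ⟨x, y_s : s ∈ μ_r⟩`. -/
abbrev Ar (G : Type) : Type := FreeAlgebra ℚ (LetR G)

noncomputable def X1 : A1 := ι ℚ LetA.x
noncomputable def Y1 : A1 := ι ℚ LetA.y

variable {G : Type} [CommGroup G]

noncomputable def Xr : Ar G := ι ℚ LetR.x
noncomputable def Yr (s : G) : Ar G := ι ℚ (LetR.y s)

/-- `z = x + y_1`. -/
noncomputable def zet : Ar G := Xr + Yr 1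

open scoped Classical in
/-- `z_s^δ = x + δ(s) y_s` with `δ(1) = 0`, `δ(s) = 1` otherwise. -/
noncomputable def zdel (s : G) : Ar G := if s = 1 then Xr else Xr + Yr s

/-- The involutive automorphism `φ` of `A_r`: `φ(x) = z`, `φ(y_s) = z_s^δ - z`. -/
noncomputable def phi : Ar G →ₐ[ℚ] Ar G :=
  lift ℚ (fun l => match l with
    | LetR.x => zet
    | LetR.y s => zdel s - zet)

/-- The natural embedding `A_1 → A_r`, `x ↦ x`, `y ↦ y_1`. -/
noncomputable def jm : A1 →ₐ[ℚ] Ar G :=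
  lift ℚ (fun l => match l with
    | LetA.x => Xr
    | LetA.y => Yr 1)

open scoped Classical in
/-- The anti-automorphism `τ` of `A_r`: `τ(x) = y_1`, `τ(y_1) = x`, `τ(y_s) = -y_s` (`s ≠ 1`). -/
noncomputable def tauR : Ar G →ₗ[ℚ] Ar G :=
  (MulOpposite.opLinearEquiv ℚ).symm.toLinearMap ∘ₗ
    (lift ℚ (fun l => match l with
      | LetR.x => MulOpposite.op (Yr 1)
      | LetR.y s => MulOpposite.op (if s = 1 then Xr else -(Yr s)) ) :
        Ar G →ₐ[ℚ] (Ar G)ᵐᵒᵖ).toLinearMap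

/-- The anti-automorphism `τ` of `A_1`: `τ(x) = y`, `τ(y) = x`. -/
noncomputable def tau1 : A1 →ₗ[ℚ] A1 :=
  (MulOpposite.opLinearEquiv ℚ).symm.toLinearMap ∘ₗ
    (lift ℚ (fun l => match l with
      | LetA.x => MulOpposite.op Y1
      | LetA.y => MulOpposite.op X1) : A1 →ₐ[ℚ] A1ᵐᵒᵖ).toLinearMap

/-- `wordP [(a₁,s₁),...,(a_l,s_l)] = x^{a₁} y_{s₁} ⋯ x^{a_l} y_{s_l}`,
i.e. the word `z_{a₁+1, s₁} ⋯ z_{a_l+1, s_l}`. -/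
noncomputable def wordP (L : List (ℕ × G)) : Ar G :=
  (L.map (fun p => Xr ^ p.1 * Yr p.2)).prod

/-- Cumulative-product reindexing of subscripts: this realizes the composition `I ∘ M_s`
on subscript lists, sending `(s₁, s₂, …, s_l)` to `(s s₁, s s₁ s₂, …, s s₁ ⋯ s_l)`. -/
def cumul : G → List (ℕ × G) → List (ℕ × G)
  | _, [] => []
  | g, p :: L => (p.1, g * p.2) :: cumul (g * p.2) L

/-- All the data entering the definition of the diamond products `⋄_s`:
the harmonic product `*`, the maps `ψ_s = φ ∘ I ∘ M_s`, and the family of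
`ℚ`-bilinear diamond products `D s : A_1 × A_r → A_r` (together with the
corestriction `D1` of `⋄_1` to `A_1 × A_1 → A_1`), each characterized by its
defining recursive rules. -/
structure DiamondSetup (G : Type) [CommGroup G] where
  /-- the harmonic product -/
  hst : Ar G →ₗ[ℚ] Ar G →ₗ[ℚ] Ar G
  one_hst : ∀ w, hst 1 w = w
  hst_one : ∀ v, hst v 1 = v
  hst_xr : ∀ v w, hst (v * Xr) w = hst v w * Xr
  hst_xl : ∀ v w, hst v (w * Xr) = hst v w * Xr
  hst_yy : ∀ (v w : Ar G) (s t : G), hst (v * Yr s) (w * Yr t) =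
      hst v (w * Yr t) * Yr s + hst (v * Yr s) w * Yr t + hst v w * (Xr * Yr (s * t))
  /-- the linear automorphisms `ψ_s = φ ∘ I ∘ M_s` -/
  psi : G → (Ar G ≃ₗ[ℚ] Ar G)
  psi_spec : ∀ (s : G) (L : List (ℕ × G)) (a : ℕ),
      psi s (wordP L * Xr ^ a) = phi (wordP (cumul s L) * Xr ^ a)
  /-- the diamond products `⋄_s : A_1 × A_r → A_r` -/
  D : G → A1 →ₗ[ℚ] Ar G →ₗ[ℚ] Ar G
  one_D : ∀ (s : G) (w : Ar G), D s 1 w = w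
  D_one : ∀ (s : G) (v : A1), D s v 1 = psi s (phi (jm v))
  Dxx : ∀ (s : G) (v : A1) (w : Ar G), D s (v * X1) (w * Xr) =
      D s v (w * Xr) * Xr - D s (v * Y1) w * Xr
  Dyx : ∀ (s : G) (v : A1) (w : Ar G), D s (v * Y1) (w * Xr) =
      D s v (w * Xr) * Yr 1 + D s (v * Y1) w * Xr
  Dxy : ∀ (s : G) (v : A1) (w : Ar G), D s (v * X1) (w * Yr 1) =
      D s v (w * Yr 1) * Xr + D s (v * X1) w * Yr 1
  Dyy : ∀ (s : G) (v : A1) (w : Ar G), D s (v * Y1) (w * Yr 1) =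
      D s v (w * Yr 1) * Yr 1 - D s (v * X1) w * Yr 1
  Dxyt : ∀ (s t : G), t ≠ 1 → ∀ (v : A1) (w : Ar G), D s (v * X1) (w * Yr t) =
      D s v (w * Yr t) * Xr + D s v (w * (Xr + Yr t)) * Yr t - D s (v * Y1) w * Yr t
  Dyyt : ∀ (s t : G), t ≠ 1 → ∀ (v : A1) (w : Ar G), D s (v * Y1) (w * Yr t) =
      D s v (w * Yr t) * Yr 1 - D s v (w * (Xr + Yr t)) * Yr t + D s (v * Y1) w * Yr t
  /-- `⋄_1` as a product `A_1 × A_1 → A_1` -/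
  D1 : A1 →ₗ[ℚ] A1 →ₗ[ℚ] A1
  D1_spec : ∀ u v : A1, jm (D1 u v) = D 1 u (jm v)



section AuxProofs

variable {G : Type} [CommGroup G]

lemma phi_Xr : phi (Xr : Ar G) = zet := by
  simp [phi, Xr, lift_ι_apply]

lemma phi_Yr (t : G) : phi (Yr t : Ar G) = zdel t - zet := by
  simp [phi, Yr, lift_ι_apply]

lemma phi_zet : phi (zet : Ar G) = Xr := by
  rw [zet]
  rw [map_add, phi_Xr, phi_Yr]
  rw [zdel]
  simp

lemma jm_X1 : (jm X1 : Ar G) = Xr := by simp [jm, X1, lift_ι_apply]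

lemma jm_Y1 : (jm Y1 : Ar G) = Yr 1 := by simp [jm, Y1, lift_ι_apply]

lemma zet_def : (zet : Ar G) = Xr + Yr 1 := rfl

lemma wordP_nil : wordP ([] : List (ℕ × G)) = 1 := rfl

lemma wordP_cons (p : ℕ × G) (L : List (ℕ × G)) :
    wordP (p :: L) = Xr ^ p.1 * Yr p.2 * wordP L := by
  simp [wordP]

lemma wordP_append (L M : List (ℕ × G)) : wordP (L ++ M) = wordP L * wordP M := by
  simp [wordP]

/-- The set of "words" `wordP L * Xr ^ a`. -/
def WSet (G : Type) [CommGroup G] : Set (Ar G) :=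
  Set.range (fun p : List (ℕ × G) × ℕ => wordP p.1 * Xr ^ p.2)

lemma WSet_mul_mem (L M : List (ℕ × G)) (a b : ℕ) :
    (wordP L * Xr ^ a) * (wordP M * Xr ^ b) ∈ WSet G := by
  cases M with
  | nil =>
      refine ⟨(L, a + b), ?_⟩
      simp [wordP_nil, pow_add, mul_assoc]
  | cons p M =>
      refine ⟨(L ++ (a + p.1, p.2) :: M, b), ?_⟩
      simp only [wordP_append, wordP_cons, pow_add, mul_assoc]

lemma WSpan_mul_mem {a b : Ar G} (ha : a ∈ Submodule.span ℚ (WSet G))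
    (hb : b ∈ Submodule.span ℚ (WSet G)) :
    a * b ∈ Submodule.span ℚ (WSet G) := by
  induction ha, hb using Submodule.span_induction₂ with
  | mem_mem x y hx hy =>
      obtain ⟨⟨L, n⟩, rfl⟩ := hx
      obtain ⟨⟨M, m⟩, rfl⟩ := hy
      exact Submodule.subset_span (WSet_mul_mem L M n m)
  | zero_left y hy => simp
  | zero_right x hx => simp
  | add_left x y z hx hy hz h1 h2 => rw [add_mul]; exact Submodule.add_mem _ h1 h2
  | add_right x y z hx hy hz h1 h2 => rw [mul_add]; exact Submodule.add_mem _ h1 h2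
  | smul_left r x y hx hy h => rw [smul_mul_assoc]; exact Submodule.smul_mem _ _ h
  | smul_right r x y hx hy h => rw [mul_smul_comm]; exact Submodule.smul_mem _ _ h

lemma mem_WSpan (w : Ar G) : w ∈ Submodule.span ℚ (WSet G) := by
  induction w using FreeAlgebra.induction with
  | grade0 r =>
      have h1 : (1 : Ar G) ∈ WSet G := ⟨([], 0), by simp [wordP_nil]⟩
      have : (algebraMap ℚ (Ar G) r) = r • (1 : Ar G) := by
        rw [Algebra.smul_def, mul_one]
      rw [this]
      exact Submodule.smul_mem _ _ (Submodule.subset_span h1)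
  | grade1 l =>
      cases l with
      | x =>
          exact Submodule.subset_span ⟨([], 1), by simp [wordP_nil, Xr]⟩
      | y t =>
          exact Submodule.subset_span ⟨([(0, t)], 0), by simp [wordP_cons, wordP_nil, Yr]⟩
  | mul a b ha hb => exact WSpan_mul_mem ha hb
  | add a b ha hb => exact Submodule.add_mem _ ha hb

lemma WSpan_top : Submodule.span ℚ (WSet G) = ⊤ :=
  eq_top_iff.mpr fun w _ => mem_WSpan w

lemma psi_mul_Xr (S : DiamondSetup G) (s : G) (u : Ar G) :
    S.psi s (u * Xr) = S.psi s u * zet := by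
  have hu : u ∈ Submodule.span ℚ (WSet G) := by rw [WSpan_top]; trivial
  induction hu using Submodule.span_induction with
  | mem x hx =>
      obtain ⟨⟨L, a⟩, rfl⟩ := hx
      simp only
      rw [mul_assoc, ← pow_succ, S.psi_spec s L (a + 1), S.psi_spec s L a,
        pow_succ, ← mul_assoc, map_mul, phi_Xr]
  | zero => simp
  | add x y hx hy h1 h2 =>
      rw [add_mul, map_add, map_add, h1, h2, add_mul]
  | smul r x hx h =>
      rw [smul_mul_assoc, map_smul, map_smul, h, smul_mul_assoc]

/-- `v z ⋄_s w = (v ⋄_s w) z`. -/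
lemma E1 (S : DiamondSetup G) (s : G) (v : A1) (w : Ar G) :
    S.D s (v * (X1 + Y1)) w = S.D s v w * zet := by
  have hsplit : S.D s (v * (X1 + Y1)) = S.D s (v * X1) + S.D s (v * Y1) := by
    rw [mul_add, map_add]
  have hw : w ∈ Submodule.span ℚ (WSet G) := by rw [WSpan_top]; trivial
  induction hw using Submodule.span_induction with
  | mem x hx =>
      obtain ⟨⟨L, a⟩, rfl⟩ := hx
      simp only
      cases a with
      | succ a =>
          rw [pow_succ, ← mul_assoc]
          rw [hsplit, LinearMap.add_apply, S.Dxx, S.Dyx, zet_def, mul_add]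
          abel
      | zero =>
          rcases List.eq_nil_or_concat L with rfl | ⟨M, p, rfl⟩
          · rw [wordP_nil, pow_zero, mul_one, S.D_one, S.D_one]
            have hj : (jm (X1 + Y1) : Ar G) = zet := by
              rw [map_add, jm_X1, jm_Y1, zet_def]
            rw [map_mul, hj, map_mul, phi_zet, psi_mul_Xr S s]
          · rw [pow_zero, mul_one, List.concat_eq_append, wordP_append, wordP_cons,
              wordP_nil, mul_one, ← mul_assoc]
            rcases eq_or_ne p.2 1 with hp | hp
            · rw [hp, hsplit, LinearMap.add_apply, S.Dxy, S.Dyy, zet_def]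
              simp only [mul_add]
              abel
            · rw [hsplit, LinearMap.add_apply, S.Dxyt s p.2 hp, S.Dyyt s p.2 hp, zet_def]
              simp only [mul_add]
              abel
  | zero => simp
  | add x y hx hy h1 h2 => rw [map_add, map_add, h1, h2, add_mul]
  | smul r x hx h => rw [map_smul, map_smul, h, smul_mul_assoc]

/-- the submodule of `v` satisfying `v ⋄_s (w z) = (v ⋄_s w) z` for all `w`. -/
noncomputable def Qsub (S : DiamondSetup G) (s : G) : Submodule ℚ A1 where
  carrier := {v | ∀ w : Ar G, S.D s v (w * zet) = S.D s v w * zet}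
  zero_mem' := by intro w; simp
  add_mem' := by
    intro a b ha hb w
    rw [map_add, LinearMap.add_apply, LinearMap.add_apply, ha w, hb w, add_mul]
  smul_mem' := by
    intro r a ha w
    rw [map_smul, LinearMap.smul_apply, LinearMap.smul_apply, ha w, smul_mul_assoc]

lemma one_mem_Qsub (S : DiamondSetup G) (s : G) : (1 : A1) ∈ Qsub S s := by
  intro w
  rw [S.one_D, S.one_D]

lemma mul_X1_mem_Qsub (S : DiamondSetup G) (s : G) {v : A1} (hv : v ∈ Qsub S s) :
    v * X1 ∈ Qsub S s := by
  intro w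
  have key : S.D s v w * zet = S.D s (v * X1) w + S.D s (v * Y1) w := by
    rw [← E1 S s v w, mul_add, map_add, LinearMap.add_apply]
  have hw : w * zet = w * Xr + w * Yr 1 := by rw [zet_def, mul_add]
  calc S.D s (v * X1) (w * zet)
      = S.D s (v * X1) (w * Xr) + S.D s (v * X1) (w * Yr 1) := by rw [hw, map_add]
    _ = (S.D s v (w * Xr) * Xr - S.D s (v * Y1) w * Xr) +
        (S.D s v (w * Yr 1) * Xr + S.D s (v * X1) w * Yr 1) := by rw [S.Dxx, S.Dxy]
    _ = (S.D s v (w * Xr) + S.D s v (w * Yr 1)) * Xr - S.D s (v * Y1) w * Xr +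
        S.D s (v * X1) w * Yr 1 := by rw [add_mul]; abel
    _ = S.D s v (w * zet) * Xr - S.D s (v * Y1) w * Xr + S.D s (v * X1) w * Yr 1 := by
        rw [hw, map_add]
    _ = (S.D s (v * X1) w + S.D s (v * Y1) w) * Xr - S.D s (v * Y1) w * Xr +
        S.D s (v * X1) w * Yr 1 := by rw [hv w, key]
    _ = S.D s (v * X1) w * Xr + S.D s (v * X1) w * Yr 1 := by rw [add_mul]; abel
    _ = S.D s (v * X1) w * zet := by rw [zet_def, mul_add]

lemma mul_Y1_mem_Qsub (S : DiamondSetup G) (s : G) {v : A1} (hv : v ∈ Qsub S s) :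
    v * Y1 ∈ Qsub S s := by
  intro w
  have key : S.D s v w * zet = S.D s (v * X1) w + S.D s (v * Y1) w := by
    rw [← E1 S s v w, mul_add, map_add, LinearMap.add_apply]
  have hw : w * zet = w * Xr + w * Yr 1 := by rw [zet_def, mul_add]
  calc S.D s (v * Y1) (w * zet)
      = S.D s (v * Y1) (w * Xr) + S.D s (v * Y1) (w * Yr 1) := by rw [hw, map_add]
    _ = (S.D s v (w * Xr) * Yr 1 + S.D s (v * Y1) w * Xr) +
        (S.D s v (w * Yr 1) * Yr 1 - S.D s (v * X1) w * Yr 1) := by rw [S.Dyx, S.Dyy]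
    _ = (S.D s v (w * Xr) + S.D s v (w * Yr 1)) * Yr 1 + S.D s (v * Y1) w * Xr -
        S.D s (v * X1) w * Yr 1 := by rw [add_mul]; abel
    _ = S.D s v (w * zet) * Yr 1 + S.D s (v * Y1) w * Xr - S.D s (v * X1) w * Yr 1 := by
        rw [hw, map_add]
    _ = (S.D s (v * X1) w + S.D s (v * Y1) w) * Yr 1 + S.D s (v * Y1) w * Xr -
        S.D s (v * X1) w * Yr 1 := by rw [hv w, key]
    _ = S.D s (v * Y1) w * Xr + S.D s (v * Y1) w * Yr 1 := by rw [add_mul]; abel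
    _ = S.D s (v * Y1) w * zet := by rw [zet_def, mul_add]

lemma mul_mem_Qsub (S : DiamondSetup G) (s : G) (b : A1) :
    ∀ a ∈ Qsub S s, a * b ∈ Qsub S s := by
  induction b using FreeAlgebra.induction with
  | grade0 r =>
      intro a ha
      have : a * algebraMap ℚ A1 r = r • a := by
        rw [Algebra.smul_def, Algebra.commutes]
      rw [this]
      exact Submodule.smul_mem _ _ ha
  | grade1 l =>
      intro a ha
      cases l with
      | x => exact mul_X1_mem_Qsub S s ha
      | y => exact mul_Y1_mem_Qsub S s ha
  | mul b1 b2 h1 h2 =>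
      intro a ha
      rw [← mul_assoc]
      exact h2 _ (h1 _ ha)
  | add b1 b2 h1 h2 =>
      intro a ha
      rw [mul_add]
      exact Submodule.add_mem _ (h1 _ ha) (h2 _ ha)

/-- `v ⋄_s (w z) = (v ⋄_s w) z`. -/
lemma E2 (S : DiamondSetup G) (s : G) (v : A1) (w : Ar G) :
    S.D s v (w * zet) = S.D s v w * zet := by
  have hv : v ∈ Qsub S s := by
    have := mul_mem_Qsub S s v 1 (one_mem_Qsub S s)
    rwa [one_mul] at this
  exact hv w

end AuxProofs

/-- For every `s ∈ μ_r`, `v ∈ A_1`, `w ∈ A_r`: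
`v z ⋄_s w = v ⋄_s (w z) = (v ⋄_s w) z`, where `z = x + y`. -/
theorem statement2 {G : Type} [CommGroup G] (S : DiamondSetup G)
    (s : G) (v : A1) (w : Ar G) :
    S.D s (v * (X1 + Y1)) w = S.D s v (w * zet) ∧
      S.D s v (w * zet) = S.D s v w * zet := by
  refine ⟨?_, E2 S s v w⟩
  rw [E1 S s v w, E2 S s v w]
end

section
/- For all s,t ∈ μ_r, v ∈ A_1, and w ∈ A_r: (i) v x ⋄_s (w z_t^δ) = (v ⋄_s w z_t^δ) z_t^δ − (v y ⋄_s w) z_t^δ, and (ii) v y ⋄_s (w z_t^δ) = (v ⋄_s w z_t^δ)(y ⋄_t 1) + (v y ⋄_s w) z_t^δ. -/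
open FreeAlgebra

variable {G : Type} [CommGroup G]

lemma D_Y1_one {G : Type} [CommGroup G] (S : DiamondSetup G) (t : G) :
    S.D t Y1 1 = zet - zdel t := by
  have hjm : (jm Y1 : Ar G) = Yr 1 := by
    simp [jm, Y1, lift_ι_apply]
  have hphi : (phi (Yr 1) : Ar G) = -(Yr 1) := by
    simp [phi, Yr, lift_ι_apply, zdel, zet]
  have hw : (wordP [(0, (1 : G))] : Ar G) = Yr 1 := by
    simp [wordP]
  have hpsi : S.psi t (Yr 1) = phi (Yr t) := by
    have := S.psi_spec t [(0, (1 : G))] 0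
    simpa [hw, wordP, cumul] using this
  have hphit : (phi (Yr t) : Ar G) = zdel t - zet := by
    simp [phi, Yr, lift_ι_apply]
  rw [S.D_one, hjm, hphi, map_neg, hpsi, hphit]
  abel

/-- For all `s, t ∈ μ_r`, `v ∈ A_1`, `w ∈ A_r`:
(i) `v x ⋄_s (w z_t^δ) = (v ⋄_s w z_t^δ) z_t^δ − (v y ⋄_s w) z_t^δ`, and
(ii) `v y ⋄_s (w z_t^δ) = (v ⋄_s w z_t^δ)(y ⋄_t 1) + (v y ⋄_s w) z_t^δ`. -/
theorem statement3 {G : Type} [CommGroup G] (S : DiamondSetup G)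
    (s t : G) (v : A1) (w : Ar G) :
    (S.D s (v * X1) (w * zdel t) =
        S.D s v (w * zdel t) * zdel t - S.D s (v * Y1) w * zdel t) ∧
      (S.D s (v * Y1) (w * zdel t) =
        S.D s v (w * zdel t) * (S.D t Y1 1) + S.D s (v * Y1) w * zdel t) := by
  rw [D_Y1_one]
  by_cases ht : t = 1
  · subst ht
    have hz : (zdel (1 : G) : Ar G) = Xr := by simp [zdel]
    have hy : (zet - zdel (1 : G) : Ar G) = Yr 1 := by
      simp [hz, zet]
    rw [hy, hz]
    exact ⟨S.Dxx s v w, S.Dyx s v w⟩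
  · have hz : (zdel t : Ar G) = Xr + Yr t := by simp [zdel, ht]
    have hy : (zet - zdel t : Ar G) = Yr 1 - Yr t := by
      rw [hz, zet]; abel
    rw [hy, hz]
    have expand : ∀ u : A1, S.D s u (w * (Xr + Yr t)) =
        S.D s u (w * Xr) + S.D s u (w * Yr t) := by
      intro u; rw [mul_add, map_add]
    constructor
    · rw [expand, expand, S.Dxx, S.Dxyt s t ht, expand]
      simp only [add_mul, mul_add, mul_sub, sub_mul]; abel
    · rw [expand, expand, S.Dyx, S.Dyyt s t ht, expand]
      simp only [add_mul, mul_add, mul_sub, sub_mul]; abel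
end

section
/- For every s ∈ μ_r, v ∈ A_1, and w ∈ A_r, the diamond product is given by v ⋄_s w = ψ_s(φ(v) * ψ_s^{-1}(w)), where * is the harmonic product. -/
open FreeAlgebra

variable {G : Type} [CommGroup G]

/-! ### Auxiliary development -/

namespace Stmt4

set_option linter.unusedSectionVars false
set_option linter.constructorNameAsVariable false

open Submodule

variable {G : Type} [CommGroup G]

/-- Product of the indices of a subscript list. -/
def eP (L : List (ℕ × G)) : G := (L.map Prod.snd).prod

@[simp] lemma eP_nil : eP ([] : List (ℕ × G)) = 1 := rfl

@[simp] lemma eP_cons (p : ℕ × G) (L : List (ℕ × G)) : eP (p :: L) = p.2 * eP L := by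
  simp [eP]

@[simp] lemma eP_append (L M : List (ℕ × G)) : eP (L ++ M) = eP L * eP M := by
  simp [eP]

@[simp] lemma wordP_nil : wordP ([] : List (ℕ × G)) = 1 := rfl

lemma wordP_cons (p : ℕ × G) (L : List (ℕ × G)) :
    wordP (p :: L) = Xr ^ p.1 * Yr p.2 * wordP L := by
  simp [wordP]

lemma wordP_append (L M : List (ℕ × G)) : wordP (L ++ M) = wordP L * wordP M := by
  simp [wordP]

lemma wordP_concat (L : List (ℕ × G)) (c : ℕ) (t : G) :
    wordP (L ++ [(c, t)]) = wordP L * (Xr ^ c * Yr t) := by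
  simp [wordP]

lemma cumul_append (g : G) (L M : List (ℕ × G)) :
    cumul g (L ++ M) = cumul g L ++ cumul (g * eP L) M := by
  induction L generalizing g with
  | nil => simp [cumul]
  | cons p L ih => simp [cumul, ih, mul_assoc]

lemma cumul_concat (g : G) (L : List (ℕ × G)) (c : ℕ) (t : G) :
    cumul g (L ++ [(c, t)]) = cumul g L ++ [(c, g * eP L * t)] := by
  rw [cumul_append]; rfl

@[simp] lemma phi_Xr : phi (Xr : Ar G) = zet := by
  simp [phi, Xr, lift_ι_apply]

@[simp] lemma phi_Yr (t : G) : phi (Yr t) = zdel t - zet := by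
  simp [phi, Yr, lift_ι_apply]

@[simp] lemma jm_X : jm X1 = (Xr : Ar G) := by
  simp [jm, X1, lift_ι_apply]

@[simp] lemma jm_Y : jm Y1 = (Yr 1 : Ar G) := by
  simp [jm, Y1, lift_ι_apply]

lemma zdel_one : (zdel 1 : Ar G) = Xr := by
  simp [zdel]

lemma zdel_ne {g : G} (h : g ≠ 1) : (zdel g : Ar G) = Xr + Yr g := by
  simp [zdel, h]


set_option linter.unusedSectionVars false

/-! #### Word multiplication -/

lemma word_mul_nil (L : List (ℕ × G)) (a b : ℕ) :
    (wordP L * Xr ^ a) * (wordP ([] : List (ℕ × G)) * Xr ^ b) = wordP L * Xr ^ (a + b) := by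
  simp [pow_add, mul_assoc]

lemma word_mul_cons (L : List (ℕ × G)) (a b m : ℕ) (t : G) (M' : List (ℕ × G)) :
    (wordP L * Xr ^ a) * (wordP ((m, t) :: M') * Xr ^ b)
      = wordP (L ++ (a + m, t) :: M') * Xr ^ b := by
  rw [wordP_append, wordP_cons, wordP_cons]
  simp only [pow_add, mul_assoc]

/-! #### Spanning sets -/

/-- All words of `Ar`. -/
def SAll : Set (Ar G) := {w | ∃ M b, w = wordP M * Xr ^ b}

lemma mul_mem_span_SAll {u v : Ar G} (hu : u ∈ span ℚ (SAll (G := G)))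
    (hv : v ∈ span ℚ (SAll (G := G))) : u * v ∈ span ℚ (SAll (G := G)) := by
  induction hu using Submodule.span_induction with
  | mem x hx =>
    induction hv using Submodule.span_induction with
    | mem y hy =>
      obtain ⟨L, a, rfl⟩ := hx
      obtain ⟨M, b, rfl⟩ := hy
      cases M with
      | nil => rw [word_mul_nil]; exact subset_span ⟨L, a + b, rfl⟩
      | cons p M' =>
        obtain ⟨m, t⟩ := p
        rw [word_mul_cons]
        exact subset_span ⟨L ++ (a + m, t) :: M', b, rfl⟩
    | zero => rw [mul_zero]; exact zero_mem _
    | add y z _ _ h1 h2 => rw [mul_add]; exact add_mem h1 h2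
    | smul r y _ h1 => rw [mul_smul_comm]; exact smul_mem _ _ h1
  | zero => rw [zero_mul]; exact zero_mem _
  | add y z _ _ h1 h2 => rw [add_mul]; exact add_mem h1 h2
  | smul r y _ h1 => rw [smul_mul_assoc]; exact smul_mem _ _ h1

lemma one_mem_span_SAll : (1 : Ar G) ∈ span ℚ (SAll (G := G)) :=
  subset_span ⟨[], 0, by simp⟩

lemma span_SAll_eq_top : span ℚ (SAll (G := G)) = ⊤ := by
  rw [eq_top_iff]
  rintro w -
  induction w using FreeAlgebra.induction with
  | grade0 r =>
    have : (algebraMap ℚ (Ar G)) r = r • 1 := by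
      rw [Algebra.algebraMap_eq_smul_one]
    rw [this]; exact smul_mem _ _ one_mem_span_SAll
  | grade1 x =>
    cases x with
    | x => exact subset_span ⟨[], 1, by simp [Xr]⟩
    | y t => exact subset_span ⟨[(0, t)], 0, by simp [wordP, Yr]⟩
  | mul a b ha hb => exact mul_mem_span_SAll ha hb
  | add a b ha hb => exact add_mem ha hb

/-- Words of `A1`. -/
noncomputable def w1 (l : List LetA) : A1 := (l.map (ι ℚ)).prod

@[simp] lemma w1_nil : w1 [] = 1 := rfl

lemma w1_append (l l' : List LetA) : w1 (l ++ l') = w1 l * w1 l' := by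
  simp [w1]

lemma w1_concat (l : List LetA) (c : LetA) : w1 (l ++ [c]) = w1 l * ι ℚ c := by
  simp [w1]

def SA1 : Set A1 := {v | ∃ l, v = w1 l}

lemma mul_mem_span_SA1 {u v : A1} (hu : u ∈ span ℚ SA1) (hv : v ∈ span ℚ SA1) :
    u * v ∈ span ℚ SA1 := by
  induction hu using Submodule.span_induction with
  | mem x hx =>
    induction hv using Submodule.span_induction with
    | mem y hy =>
      obtain ⟨l, rfl⟩ := hx
      obtain ⟨l', rfl⟩ := hy
      exact subset_span ⟨l ++ l', (w1_append l l').symm⟩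
    | zero => rw [mul_zero]; exact zero_mem _
    | add y z _ _ h1 h2 => rw [mul_add]; exact add_mem h1 h2
    | smul r y _ h1 => rw [mul_smul_comm]; exact smul_mem _ _ h1
  | zero => rw [zero_mul]; exact zero_mem _
  | add y z _ _ h1 h2 => rw [add_mul]; exact add_mem h1 h2
  | smul r y _ h1 => rw [smul_mul_assoc]; exact smul_mem _ _ h1

lemma span_SA1_eq_top : span ℚ SA1 = ⊤ := by
  rw [eq_top_iff]
  rintro v -
  induction v using FreeAlgebra.induction with
  | grade0 r =>
    have : (algebraMap ℚ A1) r = r • 1 := by rw [Algebra.algebraMap_eq_smul_one]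
    rw [this]; exact smul_mem _ _ (subset_span ⟨[], rfl⟩)
  | grade1 x => exact subset_span ⟨[x], by simp [w1]⟩
  | mul a b ha hb => exact mul_mem_span_SA1 ha hb
  | add a b ha hb => exact add_mem ha hb


/-! #### Graded pieces -/

/-- Span of words of total index `h`. -/
noncomputable def Vg (h : G) : Submodule ℚ (Ar G) :=
  span ℚ {w | ∃ M b, eP M = h ∧ w = wordP M * Xr ^ b}

lemma word_mem_Vg {M : List (ℕ × G)} {h : G} (hM : eP M = h) (b : ℕ) :
    wordP M * Xr ^ b ∈ Vg h :=
  subset_span ⟨M, b, hM, rfl⟩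

lemma Vg_mul_Xr {h : G} {w : Ar G} (hw : w ∈ Vg h) : w * Xr ∈ Vg h := by
  induction hw using Submodule.span_induction with
  | mem x hx =>
    obtain ⟨M, b, hM, rfl⟩ := hx
    rw [mul_assoc, ← pow_succ]
    exact word_mem_Vg hM (b + 1)
  | zero => rw [zero_mul]; exact zero_mem _
  | add y z _ _ h1 h2 => rw [add_mul]; exact add_mem h1 h2
  | smul r y _ h1 => rw [smul_mul_assoc]; exact smul_mem _ _ h1

lemma Vg_mul_Yr {h : G} {w : Ar G} (hw : w ∈ Vg h) (t : G) : w * Yr t ∈ Vg (h * t) := by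
  induction hw using Submodule.span_induction with
  | mem x hx =>
    obtain ⟨M, b, hM, rfl⟩ := hx
    have : wordP M * Xr ^ b * Yr t = wordP (M ++ [(b, t)]) * Xr ^ 0 := by
      rw [wordP_concat, pow_zero, mul_one, mul_assoc]
    rw [this]
    exact word_mem_Vg (by simp [hM]) 0
  | zero => rw [zero_mul]; exact zero_mem _
  | add y z _ _ h1 h2 => rw [add_mul]; exact add_mem h1 h2
  | smul r y _ h1 => rw [smul_mul_assoc]; exact smul_mem _ _ h1

/-- Span of words over `{x, y₁}` only. -/
noncomputable def J1 : Submodule ℚ (Ar G) :=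
  span ℚ {w | ∃ M b, (∀ p ∈ M, p.2 = (1 : G)) ∧ w = wordP M * Xr ^ b}

lemma one_mem_J1 : (1 : Ar G) ∈ J1 :=
  subset_span ⟨[], 0, by simp⟩

lemma Xr_mem_J1 : (Xr : Ar G) ∈ J1 :=
  subset_span ⟨[], 1, by simp⟩

lemma Yr1_mem_J1 : (Yr 1 : Ar G) ∈ J1 :=
  subset_span ⟨[(0, 1)], 0, by simp [wordP]⟩

lemma J1_mul {u v : Ar G} (hu : u ∈ (J1 : Submodule ℚ (Ar G))) (hv : v ∈ (J1 : Submodule ℚ (Ar G))) :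
    u * v ∈ (J1 : Submodule ℚ (Ar G)) := by
  induction hu using Submodule.span_induction with
  | mem x hx =>
    induction hv using Submodule.span_induction with
    | mem y hy =>
      obtain ⟨L, a, hL, rfl⟩ := hx
      obtain ⟨M, b, hM, rfl⟩ := hy
      cases M with
      | nil =>
        rw [word_mul_nil]
        exact subset_span ⟨L, a + b, hL, rfl⟩
      | cons p M' =>
        obtain ⟨m, t⟩ := p
        rw [word_mul_cons]
        refine subset_span ⟨L ++ (a + m, t) :: M', b, ?_, rfl⟩
        intro q hq
        rcases List.mem_append.mp hq with hq | hq
        · exact hL q hq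
        · rcases List.mem_cons.mp hq with rfl | hq
          · exact hM (m, t) List.mem_cons_self
          · exact hM q (List.mem_cons_of_mem _ hq)
    | zero => rw [mul_zero]; exact zero_mem _
    | add y z _ _ h1 h2 => rw [mul_add]; exact add_mem h1 h2
    | smul r y _ h1 => rw [mul_smul_comm]; exact smul_mem _ _ h1
  | zero => rw [zero_mul]; exact zero_mem _
  | add y z _ _ h1 h2 => rw [add_mul]; exact add_mem h1 h2
  | smul r y _ h1 => rw [smul_mul_assoc]; exact smul_mem _ _ h1

lemma zet_mem_J1 : (zet : Ar G) ∈ J1 := by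
  rw [zet]; exact add_mem Xr_mem_J1 Yr1_mem_J1

lemma phi_jm_mem_J1 (v : A1) : phi (jm v) ∈ (J1 : Submodule ℚ (Ar G)) := by
  induction v using FreeAlgebra.induction with
  | grade0 r =>
    rw [AlgHom.commutes, AlgHom.commutes, Algebra.algebraMap_eq_smul_one]
    exact smul_mem _ _ one_mem_J1
  | grade1 x =>
    cases x with
    | x =>
      have : jm (ι ℚ LetA.x) = (Xr : Ar G) := jm_X
      rw [this, phi_Xr]; exact zet_mem_J1
    | y =>
      have : jm (ι ℚ LetA.y) = (Yr 1 : Ar G) := jm_Y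
      rw [this, phi_Yr, zdel_one, zet]
      have h2 : (Xr : Ar G) - (Xr + Yr 1) = (-1 : ℚ) • Yr 1 := by
        rw [neg_one_smul]; abel
      rw [h2]; exact smul_mem _ _ Yr1_mem_J1
  | mul a b ha hb => rw [map_mul, map_mul]; exact J1_mul ha hb
  | add a b ha hb => rw [map_add, map_add]; exact add_mem ha hb


/-! #### `ψ` lemmas -/

variable (S : DiamondSetup G) (s : G)

lemma psi_one : S.psi s 1 = 1 := by
  have h := S.psi_spec s [] 0
  simpa [cumul] using h

lemma psi_mul_Xr (w : Ar G) : S.psi s (w * Xr) = S.psi s w * zet := by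
  have key : ∀ w ∈ span ℚ (SAll (G := G)), S.psi s (w * Xr) = S.psi s w * zet := by
    intro w hw
    induction hw using Submodule.span_induction with
    | mem x hx =>
      obtain ⟨M, b, rfl⟩ := hx
      rw [mul_assoc, ← pow_succ, S.psi_spec s M (b + 1), S.psi_spec s M b,
        pow_succ, ← mul_assoc, map_mul, phi_Xr]
    | zero => simp
    | add y z _ _ h1 h2 => rw [add_mul, map_add, map_add, h1, h2, add_mul]
    | smul r y _ h1 => rw [smul_mul_assoc, map_smul, map_smul, h1, smul_mul_assoc]
  exact key w (by rw [span_SAll_eq_top]; trivial)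

lemma psi_mul_Yr {h : G} {w : Ar G} (hw : w ∈ Vg h) (t : G) :
    S.psi s (w * Yr t) = S.psi s w * (zdel (s * h * t) - zet) := by
  induction hw using Submodule.span_induction with
  | mem x hx =>
    obtain ⟨M, b, hM, rfl⟩ := hx
    have e1 : wordP M * Xr ^ b * Yr t = wordP (M ++ [(b, t)]) * Xr ^ 0 := by
      rw [wordP_concat, pow_zero, mul_one, mul_assoc]
    rw [e1, S.psi_spec s (M ++ [(b, t)]) 0, cumul_concat, pow_zero, mul_one,
      wordP_concat, ← mul_assoc, map_mul, S.psi_spec s M b, map_mul, phi_Yr, hM,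
      mul_assoc]
  | zero => simp
  | add y z _ _ h1 h2 => rw [add_mul, map_add, map_add, h1, h2, add_mul]
  | smul r y _ h1 => rw [smul_mul_assoc, map_smul, map_smul, h1, smul_mul_assoc]


/-! #### The harmonic product respects the grading -/

/-- Total length of the word `wordP L * Xr ^ a`. -/
def len (L : List (ℕ × G)) (a : ℕ) : ℕ := a + (L.map (fun p => p.1 + 1)).sum

lemma len_succ (L : List (ℕ × G)) (a : ℕ) : len L (a + 1) = len L a + 1 := by
  simp [len]; omega

lemma len_concat (L : List (ℕ × G)) (c : ℕ) (t : G) :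
    len (L ++ [(c, t)]) 0 = len L c + 1 := by
  simp [len]; omega

lemma eP_one_of_all_one {L : List (ℕ × G)} (hL : ∀ p ∈ L, p.2 = 1) : eP L = 1 := by
  apply List.prod_eq_one
  intro x hx
  obtain ⟨p, hp, rfl⟩ := List.mem_map.mp hx
  exact hL p hp

lemma hst_word_grade : ∀ n : ℕ, ∀ (L : List (ℕ × G)) (a : ℕ) (M : List (ℕ × G)) (b : ℕ),
    (∀ p ∈ L, p.2 = 1) → len L a + len M b ≤ n →
    S.hst (wordP L * Xr ^ a) (wordP M * Xr ^ b) ∈ Vg (eP M) := by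
  intro n
  induction n using Nat.strong_induction_on with
  | _ n ih =>
  intro L a M b hL hlen
  cases b with
  | succ b' =>
    rw [pow_succ, ← mul_assoc, S.hst_xl]
    exact Vg_mul_Xr (ih (len L a + len M b') (by rw [len_succ] at hlen; omega)
      L a M b' hL le_rfl)
  | zero =>
    rcases M.eq_nil_or_concat' with rfl | ⟨M₀, ⟨c, t⟩, rfl⟩
    · have h1 : wordP ([] : List (ℕ × G)) * Xr ^ 0 = (1 : Ar G) := by simp
      rw [h1, S.hst_one]
      rw [eP_nil]
      exact word_mem_Vg (eP_one_of_all_one hL) a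
    · have hw : wordP (M₀ ++ [(c, t)]) * Xr ^ 0 = (wordP M₀ * Xr ^ c) * Yr t := by
        rw [wordP_concat, pow_zero, mul_one, mul_assoc]
      have hE : eP (M₀ ++ [(c, t)]) = eP M₀ * t := by simp [eP]
      cases a with
      | succ a' =>
        rw [pow_succ, ← mul_assoc, S.hst_xr]
        apply Vg_mul_Xr
        refine ih (len L a' + len (M₀ ++ [(c, t)]) 0) (by rw [len_succ] at hlen; omega)
          L a' (M₀ ++ [(c, t)]) 0 hL le_rfl
      | zero =>
        rcases L.eq_nil_or_concat' with rfl | ⟨L₀, ⟨c', τ⟩, rfl⟩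
        · have h1 : wordP ([] : List (ℕ × G)) * Xr ^ 0 = (1 : Ar G) := by simp
          rw [h1, S.one_hst]
          exact word_mem_Vg rfl 0
        · have hτ : τ = 1 := hL (c', τ) (by simp)
          subst hτ
          have hv : wordP (L₀ ++ [(c', 1)]) * Xr ^ 0 = (wordP L₀ * Xr ^ c') * Yr 1 := by
            rw [wordP_concat, pow_zero, mul_one, mul_assoc]
          have hL₀ : ∀ p ∈ L₀, p.2 = (1 : G) := fun p hp => hL p (by simp [hp])
          have hlen1 : len L₀ c' + 1 + (len M₀ c + 1) ≤ n := by
            rw [len_concat, len_concat] at hlen; omega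
          rw [hv, hw, S.hst_yy]
          refine add_mem (add_mem ?_ ?_) ?_
          · -- hst v₀ (w₀ * Yr t) * Yr 1
            have := ih (len L₀ c' + len (M₀ ++ [(c, t)]) 0) (by rw [len_concat]; omega)
              L₀ c' (M₀ ++ [(c, t)]) 0 hL₀ le_rfl
            rw [hw] at this
            have h3 := Vg_mul_Yr this 1
            rwa [mul_one] at h3
          · -- hst (v₀ * Yr 1) w₀ * Yr t
            have := ih (len (L₀ ++ [(c', 1)]) 0 + len M₀ c) (by rw [len_concat]; omega)
              (L₀ ++ [(c', 1)]) 0 M₀ c hL le_rfl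
            rw [hv] at this
            have h3 := Vg_mul_Yr this t
            rwa [← hE] at h3
          · -- hst v₀ w₀ * (Xr * Yr (1 * t))
            have := ih (len L₀ c' + len M₀ c) (by omega) L₀ c' M₀ c hL₀ le_rfl
            rw [one_mul, ← mul_assoc]
            have h3 := Vg_mul_Yr (Vg_mul_Xr this) t
            rwa [← hE] at h3

lemma hst_J1_Vg {p w : Ar G} {h : G} (hp : p ∈ (J1 : Submodule ℚ (Ar G))) (hw : w ∈ Vg h) :
    S.hst p w ∈ Vg h := by
  induction hp using Submodule.span_induction with
  | mem x hx =>
    induction hw using Submodule.span_induction with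
    | mem y hy =>
      obtain ⟨L, a, hL, rfl⟩ := hx
      obtain ⟨M, b, hM, rfl⟩ := hy
      exact hM ▸ hst_word_grade S (len L a + len M b) L a M b hL le_rfl
    | zero => rw [map_zero]; exact zero_mem _
    | add y z _ _ h1 h2 => rw [map_add]; exact add_mem h1 h2
    | smul r y _ h1 => rw [map_smul]; exact smul_mem _ _ h1
  | zero => rw [map_zero, LinearMap.zero_apply]; exact zero_mem _
  | add y z _ _ h1 h2 => rw [map_add, LinearMap.add_apply]; exact add_mem h1 h2
  | smul r y _ h1 => rw [map_smul, LinearMap.smul_apply]; exact smul_mem _ _ h1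


/-! #### The main induction -/

lemma w1_concat_x (l : List LetA) : w1 (l ++ [LetA.x]) = w1 l * X1 := by
  rw [w1_concat]; rfl

lemma w1_concat_y (l : List LetA) : w1 (l ++ [LetA.y]) = w1 l * Y1 := by
  rw [w1_concat]; rfl

lemma phijm_concat_x (l : List LetA) :
    phi (jm (w1 (l ++ [LetA.x]))) = phi (jm (w1 l)) * (zet : Ar G) := by
  rw [w1_concat_x, map_mul, map_mul, jm_X, phi_Xr]

lemma zdel_one_sub_zet : (zdel 1 - zet : Ar G) = -Yr 1 := by
  rw [zdel_one, zet]; abel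

lemma phijm_concat_y (l : List LetA) :
    phi (jm (w1 (l ++ [LetA.y]))) = -(phi (jm (w1 l)) * (Yr 1 : Ar G)) := by
  rw [w1_concat_y, map_mul, map_mul, jm_Y, phi_Yr, zdel_one_sub_zet, mul_neg]

lemma key : ∀ n : ℕ, ∀ (l : List LetA) (M : List (ℕ × G)) (b : ℕ),
    l.length + len M b ≤ n →
    S.D s (w1 l) (S.psi s (wordP M * Xr ^ b)) =
      S.psi s (S.hst (phi (jm (w1 l))) (wordP M * Xr ^ b)) := by
  intro n
  induction n using Nat.strong_induction_on with
  | _ n ih =>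
  intro l M b hlen
  rcases l.eq_nil_or_concat' with rfl | ⟨l', c, rfl⟩
  · rw [w1_nil, S.one_D, map_one, map_one, S.one_hst]
  have hlength : (l' ++ [c]).length = l'.length + 1 := by simp
  cases b with
  | succ b' =>
    have hword : wordP M * Xr ^ (b' + 1) = wordP M * Xr ^ b' * Xr := by
      rw [pow_succ, mul_assoc]
    have hlen2 : l'.length + 1 + (len M b' + 1) ≤ n := by
      rw [hlength, len_succ] at hlen; omega
    -- the three induction hypotheses
    have IH1 := ih (l'.length + len M (b' + 1)) (by rw [len_succ]; omega) l' M (b' + 1) le_rfl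
    have IHx := ih (l'.length + 1 + len M b') (by omega) (l' ++ [LetA.x]) M b'
      (by simp [List.length_append])
    have IHy := ih (l'.length + 1 + len M b') (by omega) (l' ++ [LetA.y]) M b'
      (by simp [List.length_append])
    -- rework IH1 : D v' (W₁ Xr) + D v' (W₁ Yr1) = P * zet
    rw [hword, psi_mul_Xr, S.hst_xl, psi_mul_Xr, zet, mul_add, map_add] at IH1
    -- rework IHy : D (v' * Y1) W₁ = - Q
    rw [phijm_concat_y, map_neg, LinearMap.neg_apply, map_neg, w1_concat_y] at IHy
    -- rework IHx : D (v' * X1) W₁ = P * zet + Q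
    rw [phijm_concat_x, zet, mul_add, map_add, LinearMap.add_apply,
      S.hst_xr, map_add, psi_mul_Xr, w1_concat_x] at IHx
    have hIH1 := eq_sub_of_add_eq IH1
    cases c with
    | x =>
      rw [hword, psi_mul_Xr, phijm_concat_x, w1_concat_x, S.hst_xl, psi_mul_Xr]
      simp only [zet, mul_add, map_add, LinearMap.add_apply, S.hst_xr]
      rw [S.Dxx, S.Dxy, psi_mul_Xr]
      rw [hIH1, IHy, IHx]
      simp only [zet, mul_add, add_mul]
      noncomm_ring
    | y =>
      rw [hword, psi_mul_Xr, phijm_concat_y, w1_concat_y, S.hst_xl, psi_mul_Xr]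
      simp only [map_neg, LinearMap.neg_apply, zet, mul_add, map_add]
      rw [S.Dyx, S.Dyy]
      rw [hIH1, IHy, IHx]
      simp only [zet, mul_add]
      noncomm_ring
  | zero =>
    rcases M.eq_nil_or_concat' with rfl | ⟨M₀, ⟨c₀, t⟩, rfl⟩
    · have h1 : wordP ([] : List (ℕ × G)) * Xr ^ 0 = (1 : Ar G) := by simp
      rw [h1, psi_one, S.D_one, S.hst_one]
    · have hw : wordP (M₀ ++ [(c₀, t)]) * Xr ^ 0 = (wordP M₀ * Xr ^ c₀) * Yr t := by
        rw [wordP_concat, pow_zero, mul_one, mul_assoc]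
      have hlen2 : l'.length + 1 + (len M₀ c₀ + 1) ≤ n := by
        rw [hlength, len_concat] at hlen; omega
      have hpsiy : S.psi s ((wordP M₀ * Xr ^ c₀) * Yr t)
          = S.psi s (wordP M₀ * Xr ^ c₀) * (zdel (s * eP M₀ * t) - zet) :=
        psi_mul_Yr S s (word_mem_Vg rfl c₀) t
      -- induction hypotheses
      have IHA := ih (l'.length + len (M₀ ++ [(c₀, t)]) 0) (by rw [len_concat]; omega)
        l' (M₀ ++ [(c₀, t)]) 0 le_rfl
      have IH1 := ih (l'.length + len M₀ (c₀ + 1)) (by rw [len_succ]; omega)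
        l' M₀ (c₀ + 1) le_rfl
      have IHx := ih (l'.length + 1 + len M₀ c₀) (by omega) (l' ++ [LetA.x]) M₀ c₀
        (by simp [List.length_append])
      have IHy := ih (l'.length + 1 + len M₀ c₀) (by omega) (l' ++ [LetA.y]) M₀ c₀
        (by simp [List.length_append])
      -- rework the induction hypotheses
      rw [hw, hpsiy] at IHA
      rw [pow_succ, ← mul_assoc, psi_mul_Xr, S.hst_xl, psi_mul_Xr] at IH1
      rw [zet, mul_add, map_add] at IH1
      have hIH1 := eq_sub_of_add_eq IH1
      rw [phijm_concat_x, zet, mul_add, map_add, LinearMap.add_apply,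
        S.hst_xr, map_add, psi_mul_Xr, w1_concat_x] at IHx
      rw [phijm_concat_y, map_neg, LinearMap.neg_apply, map_neg, w1_concat_y] at IHy
      -- the psi-evaluation of the three harmonic terms
      have m1 : S.hst (phi (jm (w1 l'))) ((wordP M₀ * Xr ^ c₀) * Yr t) ∈ Vg (eP M₀ * t) :=
        hst_J1_Vg S (phi_jm_mem_J1 _) (Vg_mul_Yr (word_mem_Vg rfl c₀) t)
      have hgidx : s * (eP M₀ * t) * 1 = s * eP M₀ * t := by
        rw [mul_one, mul_assoc]
      have e1 := psi_mul_Yr S s m1 1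
      rw [hgidx] at e1
      have m2 : S.hst (phi (jm (w1 l')) * Yr 1) (wordP M₀ * Xr ^ c₀) ∈ Vg (eP M₀) :=
        hst_J1_Vg S (J1_mul (phi_jm_mem_J1 _) Yr1_mem_J1) (word_mem_Vg rfl c₀)
      have e2 := psi_mul_Yr S s m2 t
      have m3 : S.hst (phi (jm (w1 l'))) (wordP M₀ * Xr ^ c₀) * Xr ∈ Vg (eP M₀) :=
        Vg_mul_Xr (hst_J1_Vg S (phi_jm_mem_J1 _) (word_mem_Vg rfl c₀))
      have e3 := psi_mul_Yr S s m3 t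
      rw [psi_mul_Xr] at e3
      -- rewrite the goal
      rw [hw, hpsiy]
      by_cases hg : s * eP M₀ * t = 1
      · have hzd : zdel (s * eP M₀ * t) - zet = -(Yr 1 : Ar G) := by
          rw [hg]; exact zdel_one_sub_zet
        rw [hzd] at IHA e1 e2 e3 ⊢
        rw [mul_neg, map_neg] at IHA
        have hd0 := neg_eq_iff_eq_neg.mp IHA
        cases c with
        | x =>
          rw [phijm_concat_x, w1_concat_x, mul_neg, map_neg, S.Dxy]
          simp only [zet, mul_add, map_add, LinearMap.add_apply, S.hst_xr,
            S.hst_yy, one_mul]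
          rw [psi_mul_Xr, ← mul_assoc, e1, e2, e3]
          rw [hd0, IHx]
          simp only [zet, mul_add]
          noncomm_ring
        | y =>
          rw [phijm_concat_y, w1_concat_y, mul_neg, map_neg, S.Dyy]
          simp only [map_neg, LinearMap.neg_apply, zet, mul_add, map_add,
            S.hst_yy, one_mul]
          rw [← mul_assoc, e1, e2, e3, hd0, IHx]
          simp only [zet, mul_add]
          noncomm_ring
      · have hzd : zdel (s * eP M₀ * t) - zet
            = Yr (s * eP M₀ * t) - (Yr 1 : Ar G) := by
          rw [zdel_ne hg, zet]; abel
        rw [hzd] at IHA e1 e2 e3 ⊢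
        rw [mul_sub, map_sub] at IHA
        have hdg := eq_add_of_sub_eq IHA
        cases c with
        | x =>
          rw [phijm_concat_x, w1_concat_x, mul_sub, map_sub,
            S.Dxyt s (s * eP M₀ * t) hg, S.Dxy]
          simp only [zet, mul_add, map_add, LinearMap.add_apply, S.hst_xr,
            S.hst_yy, one_mul]
          rw [psi_mul_Xr, ← mul_assoc, e1, e2, e3]
          rw [hdg, hIH1, IHx, IHy]
          simp only [zet, mul_add]
          noncomm_ring
        | y =>
          rw [phijm_concat_y, w1_concat_y, mul_sub, map_sub,
            S.Dyyt s (s * eP M₀ * t) hg, S.Dyy]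
          simp only [map_neg, LinearMap.neg_apply, zet, mul_add, map_add,
            S.hst_yy, one_mul]
          rw [← mul_assoc, e1, e2, e3]
          rw [hdg, hIH1, IHx, IHy]
          simp only [zet, mul_add]
          noncomm_ring

end Stmt4

/-- For every `s ∈ μ_r`, `v ∈ A_1`, `w ∈ A_r`:
`v ⋄_s w = ψ_s(φ(v) * ψ_s⁻¹(w))`, where `*` is the harmonic product. -/
theorem statement4 {G : Type} [CommGroup G] (S : DiamondSetup G)
    (s : G) (v : A1) (w : Ar G) :
    S.D s v w = S.psi s (S.hst (phi (jm v)) ((S.psi s).symm w)) := by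
  have main : ∀ v ∈ Submodule.span ℚ Stmt4.SA1,
      ∀ u ∈ Submodule.span ℚ (Stmt4.SAll (G := G)),
      S.D s v (S.psi s u) = S.psi s (S.hst (phi (jm v)) u) := by
    intro v hv u hu
    induction hv using Submodule.span_induction with
    | mem x hx =>
      induction hu using Submodule.span_induction with
      | mem y hy =>
        obtain ⟨l, rfl⟩ := hx
        obtain ⟨M, b, rfl⟩ := hy
        exact Stmt4.key S s (l.length + Stmt4.len M b) l M b le_rfl
      | zero => simp
      | add y z hy hz h1 h2 => simp only [map_add]; rw [h1, h2]
      | smul r y hy h1 => simp only [map_smul]; rw [h1]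
    | zero => simp
    | add x y hx hy h1 h2 => simp only [map_add, LinearMap.add_apply]; rw [h1, h2]
    | smul r x hx h1 => simp only [map_smul, LinearMap.smul_apply]; rw [h1]
  have h := main v (by rw [Stmt4.span_SA1_eq_top]; trivial)
    ((S.psi s).symm w) (by rw [Stmt4.span_SAll_eq_top]; trivial)
  rwa [LinearEquiv.apply_symm_apply] at h
end

section
/- For all s, t ∈ μ_r and v, w ∈ A_r: y ⋄_s (v z_t^δ w) = (y ⋄_s v) z_t^δ w + v z_t^δ (y ⋄_s w) + v z_t^δ (z_s^δ − z_t^δ) w. -/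
open FreeAlgebra

variable {G : Type} [CommGroup G]

section Statement6Aux

open FreeAlgebra

variable {G : Type} [CommGroup G] (S : DiamondSetup G) (s : G)

private lemma jmX6 : jm (G := G) X1 = Xr := by
  simp [jm, X1, Xr, lift_ι_apply]

private lemma jmY6 : jm (G := G) Y1 = Yr 1 := by
  simp [jm, Y1, Yr, lift_ι_apply]

private lemma phiX6 : phi (G := G) Xr = zet := by
  simp [phi, Xr, lift_ι_apply]

private lemma phiY6 (t : G) : phi (Yr t) = zdel t - zet := by
  simp [phi, Yr, lift_ι_apply]

private lemma psiX6 : S.psi s Xr = zet := by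
  have h := S.psi_spec s [] 1
  simpa [wordP, cumul, phiX6] using h

private lemma psiY6 : S.psi s (Yr 1) = zdel s - zet := by
  have h := S.psi_spec s [((0:ℕ), (1:G))] 0
  simpa [wordP, cumul, phiY6] using h

private lemma DY1one : S.D s Y1 1 = zet - zdel s := by
  rw [S.D_one, jmY6, phiY6]
  have h1 : zdel (1:G) - zet = -(Yr 1) := by
    rw [zdel, if_pos rfl, zet]; abel
  rw [h1, map_neg, psiY6]; abel

private lemma DX1one : S.D s X1 1 = zdel s := by
  rw [S.D_one, jmX6, phiX6]
  have h1 : (zet : Ar G) = Xr + Yr 1 := rfl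
  rw [h1, map_add, psiX6, psiY6]
  abel

omit [CommGroup G] in
private lemma mulAlg (u : Ar G) (r : ℚ) :
    u * algebraMap ℚ (Ar G) r = r • u := by
  rw [Algebra.smul_def, Algebra.commutes]

private lemma ruleA (u : Ar G) :
    S.D s Y1 (u * Xr) = S.D s Y1 u * Xr + u * Xr * Yr 1 := by
  have h := S.Dyx s 1 u
  simp only [one_mul, S.one_D] at h
  rw [h]; abel

/-- the counit -/
private noncomputable def eps6 : Ar G →ₐ[ℚ] ℚ := lift ℚ (fun _ => 0)

private lemma Fletter (u : Ar G) (l : LetR G) :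
    S.D s X1 (u * ι ℚ l) + S.D s Y1 (u * ι ℚ l) = u * ι ℚ l * zet := by
  cases l with
  | x =>
    have h1 := S.Dxx s 1 u
    have h2 := S.Dyx s 1 u
    simp only [one_mul, S.one_D] at h1 h2
    show S.D s X1 (u * Xr) + S.D s Y1 (u * Xr) = u * Xr * zet
    rw [h1, h2, zet]; noncomm_ring
  | y t =>
    by_cases ht : t = 1
    · subst ht
      have h1 := S.Dxy s 1 u
      have h2 := S.Dyy s 1 u
      simp only [one_mul, S.one_D] at h1 h2
      show S.D s X1 (u * Yr 1) + S.D s Y1 (u * Yr 1) = u * Yr 1 * zet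
      rw [h1, h2, zet]; noncomm_ring
    · have h1 := S.Dxyt s t ht 1 u
      have h2 := S.Dyyt s t ht 1 u
      simp only [one_mul, S.one_D] at h1 h2
      show S.D s X1 (u * Yr t) + S.D s Y1 (u * Yr t) = u * Yr t * zet
      rw [h1, h2, zet]; noncomm_ring

private lemma lemF (w : Ar G) :
    S.D s X1 w + S.D s Y1 w = w * zet := by
  have key : ∀ w u : Ar G,
      S.D s X1 (u * w) + S.D s Y1 (u * w) =
        u * w * zet + eps6 w • (S.D s X1 u + S.D s Y1 u - u * zet) := by
    intro w
    induction w using FreeAlgebra.induction with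
    | grade0 r =>
      intro u
      have he : eps6 (G := G) (algebraMap ℚ (Ar G) r) = r := by
        simp [eps6]
      rw [he, mulAlg, map_smul, map_smul, smul_mul_assoc]
      module
    | grade1 l =>
      intro u
      have he : eps6 (G := G) (ι ℚ l) = 0 := by
        simp [eps6, lift_ι_apply]
      rw [he, zero_smul, add_zero, Fletter]
    | mul a b iha ihb =>
      intro u
      rw [← mul_assoc, ihb (u * a), iha u, add_sub_cancel_left, smul_smul,
        mul_comm (eps6 b) (eps6 a), ← map_mul]
    | add a b iha ihb =>
      intro u
      calc S.D s X1 (u * (a + b)) + S.D s Y1 (u * (a + b))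
          = (S.D s X1 (u * a) + S.D s Y1 (u * a))
            + (S.D s X1 (u * b) + S.D s Y1 (u * b)) := by
            rw [mul_add, map_add, map_add]; abel
        _ = (u * a * zet + eps6 a • (S.D s X1 u + S.D s Y1 u - u * zet))
            + (u * b * zet + eps6 b • (S.D s X1 u + S.D s Y1 u - u * zet)) := by
            rw [iha, ihb]
        _ = u * (a + b) * zet
            + eps6 (a + b) • (S.D s X1 u + S.D s Y1 u - u * zet) := by
            rw [map_add, mul_add, add_mul, add_smul]; abel
  have h := key w 1
  rw [one_mul, DX1one, DY1one, one_mul] at h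
  have h2 : zdel s + (zet - zdel s) - zet = 0 := by abel
  rw [h2, smul_zero, add_zero] at h
  exact h

private lemma ruleB (u : Ar G) :
    S.D s Y1 (u * Yr 1) = S.D s Y1 u * Yr 1 - u * Xr * Yr 1 := by
  have h2 := S.Dyy s 1 u
  simp only [one_mul, S.one_D] at h2
  have hF : S.D s X1 u = u * zet - S.D s Y1 u := by
    rw [← lemF S s u]; abel
  rw [h2, hF, zet]; noncomm_ring

private lemma ruleC (t : G) (ht : t ≠ 1) (u : Ar G) :
    S.D s Y1 (u * Yr t) =
      S.D s Y1 u * Yr t + u * Yr t * Yr 1 - u * (Xr + Yr t) * Yr t := by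
  have h2 := S.Dyyt s t ht 1 u
  simp only [one_mul, S.one_D] at h2
  rw [h2]; noncomm_ring

private lemma lemG (w u : Ar G) :
    S.D s Y1 (u * w) =
      S.D s Y1 u * w + u * (S.D s Y1 w - (zet - zdel s) * w) := by
  induction w using FreeAlgebra.induction generalizing u with
  | grade0 r =>
    rw [mulAlg, map_smul, mulAlg, Algebra.algebraMap_eq_smul_one, map_smul,
      DY1one, mul_smul_comm, mul_one, sub_self, mul_zero, add_zero]
  | grade1 l =>
    cases l with
    | x =>
      show S.D s Y1 (u * Xr) =
        S.D s Y1 u * Xr + u * (S.D s Y1 Xr - (zet - zdel s) * Xr)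
      have hx := ruleA S s 1
      simp only [one_mul] at hx
      rw [DY1one] at hx
      rw [ruleA, hx]; noncomm_ring
    | y t =>
      by_cases ht : t = 1
      · subst ht
        show S.D s Y1 (u * Yr 1) =
          S.D s Y1 u * Yr 1 + u * (S.D s Y1 (Yr 1) - (zet - zdel s) * Yr 1)
        have hy := ruleB S s 1
        simp only [one_mul] at hy
        rw [DY1one] at hy
        rw [ruleB, hy]; noncomm_ring
      · show S.D s Y1 (u * Yr t) =
          S.D s Y1 u * Yr t + u * (S.D s Y1 (Yr t) - (zet - zdel s) * Yr t)
        have hy := ruleC S s t ht 1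
        simp only [one_mul] at hy
        rw [DY1one] at hy
        rw [ruleC S s t ht, hy]; noncomm_ring
  | mul a b iha ihb =>
    rw [← mul_assoc, ihb (u * a), iha u, ihb a]
    noncomm_ring
  | add a b iha ihb =>
    rw [mul_add, map_add, iha, ihb, map_add]
    noncomm_ring

private lemma lemD (t : G) (v : Ar G) :
    S.D s Y1 (v * zdel t) =
      S.D s Y1 v * zdel t + v * zdel t * (zet - zdel t) := by
  by_cases ht : t = 1
  · subst ht
    rw [zdel, if_pos rfl, ruleA, zet]
    noncomm_ring
  · rw [zdel, if_neg ht, mul_add, map_add, ruleA, ruleC S s t ht, zet]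
    noncomm_ring

end Statement6Aux

/-- For all `s, t ∈ μ_r` and `v, w ∈ A_r`:
`y ⋄_s (v z_t^δ w) = (y ⋄_s v) z_t^δ w + v z_t^δ (y ⋄_s w) + v z_t^δ (z_s^δ − z_t^δ) w`. -/
theorem statement6 {G : Type} [CommGroup G] (S : DiamondSetup G)
    (s t : G) (v w : Ar G) :
    S.D s Y1 (v * zdel t * w) =
      S.D s Y1 v * zdel t * w + v * zdel t * S.D s Y1 w
        + v * zdel t * (zdel s - zdel t) * w := by
  rw [lemG S s w (v * zdel t), lemD S s t v]
  noncomm_ring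
end

section
/- For every s ∈ μ_r and v, v' ∈ A_1: (v v') ⋄_s 1 = (v ⋄_s 1)(v' ⋄_s 1), i.e., the map v ↦ v ⋄_s 1 is multiplicative on A_1. -/
open FreeAlgebra

variable {G : Type} [CommGroup G]

section Aux

variable {G : Type} [CommGroup G]

/-- words with constant subscript `g`. -/
noncomputable def wrd (L : List ℕ) (a : ℕ) (g : G) : Ar G :=
  wordP (L.map (fun n => (n, g))) * Xr ^ a

lemma cumul_tag (g : G) (L : List ℕ) (K : List (ℕ × G)) :
    cumul g (L.map (fun n => (n, (1:G))) ++ K)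
      = L.map (fun n => (n, g)) ++ cumul g K := by
  induction L generalizing K with
  | nil => simp
  | cons h t ih => simp [cumul, mul_one, ih]

lemma cumul_tag' (g : G) (L : List ℕ) :
    cumul g (L.map (fun n => (n, (1:G)))) = L.map (fun n => (n, g)) := by
  have := cumul_tag g L []
  simpa [cumul] using this

lemma wrd_mul_nil (g : G) (L : List ℕ) (a a' : ℕ) :
    wrd L a g * wrd [] a' g = wrd L (a + a') g := by
  simp [wrd, wordP, pow_add, mul_assoc]

lemma wrd_mul_cons (g : G) (L : List ℕ) (a : ℕ) (b : ℕ) (t : List ℕ) (a' : ℕ) :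
    wrd L a g * wrd (b :: t) a' g = wrd (L ++ (a + b) :: t) a' g := by
  simp [wrd, wordP, pow_add, mul_assoc]

lemma psi_wrd (S : DiamondSetup G) (s : G) (L : List ℕ) (a : ℕ) :
    S.psi s (wrd L a (1:G)) = phi (wrd L a s) := by
  have h := S.psi_spec s (L.map (fun n => (n, (1:G)))) a
  rw [wrd, h, cumul_tag', wrd]

lemma psi_mul_wrd (S : DiamondSetup G) (s : G) (L L' : List ℕ) (a a' : ℕ) :
    S.psi s (wrd L a (1:G) * wrd L' a' (1:G))
      = S.psi s (wrd L a (1:G)) * S.psi s (wrd L' a' (1:G)) := by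
  cases L' with
  | nil =>
    rw [wrd_mul_nil, psi_wrd, psi_wrd, psi_wrd, ← map_mul, wrd_mul_nil]
  | cons b t =>
    rw [wrd_mul_cons, psi_wrd, psi_wrd, psi_wrd, ← map_mul, wrd_mul_cons]

/-- the span of all subscript-1 words. -/
noncomputable def Msub : Submodule ℚ (Ar G) :=
  Submodule.span ℚ (Set.range (fun p : List ℕ × ℕ => wrd p.1 p.2 (1:G)))

lemma mem_Msub_mul {u u' : Ar G} (hu : u ∈ Msub) (hu' : u' ∈ Msub) :
    u * u' ∈ Msub := by
  have hle : (Msub : Submodule ℚ (Ar G)) * Msub ≤ Msub := by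
    rw [Msub, Submodule.span_mul_span]
    apply Submodule.span_le.mpr
    rintro _ ⟨_, ⟨⟨L, a⟩, rfl⟩, _, ⟨⟨L', a'⟩, rfl⟩, rfl⟩
    cases L' with
    | nil => exact Submodule.subset_span ⟨(L, a + a'), (wrd_mul_nil 1 L a a').symm⟩
    | cons b t =>
      exact Submodule.subset_span ⟨(L ++ (a + b) :: t, a'),
        (wrd_mul_cons 1 L a b t a').symm⟩
  exact hle (Submodule.mul_mem_mul hu hu')

lemma psi_mul (S : DiamondSetup G) (s : G) {u u' : Ar G}
    (hu : u ∈ Msub) (hu' : u' ∈ Msub) :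
    S.psi s (u * u') = S.psi s u * S.psi s u' := by
  induction hu, hu' using Submodule.span_induction₂ with
  | mem_mem x y hx hy =>
    obtain ⟨⟨L, a⟩, rfl⟩ := hx
    obtain ⟨⟨L', a'⟩, rfl⟩ := hy
    exact psi_mul_wrd S s L L' a a'
  | zero_left y hy => simp
  | zero_right x hx => simp
  | add_left x y z hx hy hz h1 h2 => simp [add_mul, map_add, h1, h2]
  | add_right x y z hx hy hz h1 h2 => simp [mul_add, map_add, h1, h2]
  | smul_left r x y hx hy h => simp [smul_mul_assoc, map_smul, h]
  | smul_right r x y hx hy h => simp [mul_smul_comm, map_smul, h]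

lemma one_mem_Msub : (1 : Ar G) ∈ Msub :=
  Submodule.subset_span ⟨(([] : List ℕ), 0), by simp [wrd, wordP]⟩

lemma Xr_mem_Msub : (Xr : Ar G) ∈ Msub :=
  Submodule.subset_span ⟨(([] : List ℕ), 1), by simp [wrd, wordP]⟩

lemma Yr_one_mem_Msub : (Yr 1 : Ar G) ∈ Msub :=
  Submodule.subset_span ⟨(([0] : List ℕ), 0), by simp [wrd, wordP]⟩

lemma phi_jm_mem (v : A1) : phi (jm v) ∈ (Msub : Submodule ℚ (Ar G)) := by
  induction v using FreeAlgebra.induction with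
  | grade0 r =>
    rw [AlgHom.commutes, AlgHom.commutes]
    rw [Algebra.algebraMap_eq_smul_one]
    exact Submodule.smul_mem _ _ one_mem_Msub
  | grade1 l =>
    cases l with
    | x =>
      have : phi (jm (ι ℚ LetA.x)) = (zet : Ar G) := by
        simp [jm, phi, zet, Xr]
      rw [this]
      exact Submodule.add_mem _ Xr_mem_Msub Yr_one_mem_Msub
    | y =>
      have : phi (jm (ι ℚ LetA.y)) = (-(Yr 1) : Ar G) := by
        simp [jm, phi, zdel, zet, Yr]
      rw [this]
      exact Submodule.neg_mem _ Yr_one_mem_Msub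
  | mul a b ha hb =>
    rw [map_mul, map_mul]
    exact mem_Msub_mul ha hb
  | add a b ha hb =>
    rw [map_add, map_add]
    exact Submodule.add_mem _ ha hb

end Aux

/-- For every `s ∈ μ_r` and `v, v' ∈ A_1`: `(v v') ⋄_s 1 = (v ⋄_s 1)(v' ⋄_s 1)`,
i.e. the map `v ↦ v ⋄_s 1` is multiplicative on `A_1`. -/
theorem statement9 {G : Type} [CommGroup G] (S : DiamondSetup G)
    (s : G) (v v' : A1) :
    S.D s (v * v') 1 = S.D s v 1 * S.D s v' 1 := by
  rw [S.D_one, S.D_one, S.D_one, map_mul, map_mul,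
    psi_mul S s (phi_jm_mem v) (phi_jm_mem v')]
end

section
/- For all s ∈ μ_r, v ∈ A_1, and w ∈ A_r: (yv) ⋄_s (zw) = (y ⋄_s 1)(v ⋄_s zw) + z(yv ⋄_s w) − z(y ⋄_s 1)(v ⋄_s w). -/
open FreeAlgebra

variable {G : Type} [CommGroup G]

namespace Stmt11

/-- Words of `A1`, with the head of the list being the *last* letter. -/
noncomputable def wA : List LetA → A1
  | [] => 1
  | a :: l => wA l * ι ℚ a

/-- Words of `Ar G`, with the head of the list being the *last* letter. -/
noncomputable def wR {G : Type} : List (LetR G) → Ar G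
  | [] => 1
  | a :: l => wR l * ι ℚ a

lemma wA_append (l1 l2 : List LetA) : wA (l1 ++ l2) = wA l2 * wA l1 := by
  induction l1 with
  | nil => simp [wA]
  | cons a l ih => simp [wA, ih, mul_assoc]

lemma wR_append {G : Type} (l1 l2 : List (LetR G)) : wR (l1 ++ l2) = wR l2 * wR l1 := by
  induction l1 with
  | nil => simp [wR]
  | cons a l ih => simp [wR, ih, mul_assoc]

lemma mul_mem_span_wA {a b : A1} (ha : a ∈ Submodule.span ℚ (Set.range wA))
    (hb : b ∈ Submodule.span ℚ (Set.range wA)) :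
    a * b ∈ Submodule.span ℚ (Set.range wA) := by
  induction ha using Submodule.span_induction with
  | mem x hx =>
    induction hb using Submodule.span_induction with
    | mem y hy =>
      obtain ⟨l1, rfl⟩ := hx
      obtain ⟨l2, rfl⟩ := hy
      exact Submodule.subset_span ⟨l2 ++ l1, wA_append l2 l1⟩
    | zero => rw [mul_zero]; exact Submodule.zero_mem _
    | add y z _ _ h1 h2 => rw [mul_add]; exact Submodule.add_mem _ h1 h2
    | smul r y _ h1 => rw [mul_smul_comm]; exact Submodule.smul_mem _ _ h1
  | zero => rw [zero_mul]; exact Submodule.zero_mem _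
  | add x y _ _ h1 h2 => rw [add_mul]; exact Submodule.add_mem _ h1 h2
  | smul r x _ h1 => rw [smul_mul_assoc]; exact Submodule.smul_mem _ _ h1

lemma mem_span_wA (v : A1) : v ∈ Submodule.span ℚ (Set.range wA) := by
  induction v using FreeAlgebra.induction with
  | grade0 r =>
    rw [Algebra.algebraMap_eq_smul_one]
    exact Submodule.smul_mem _ _ (Submodule.subset_span ⟨[], rfl⟩)
  | grade1 a => exact Submodule.subset_span ⟨[a], by simp [wA]⟩
  | add a b ha hb => exact Submodule.add_mem _ ha hb
  | mul a b ha hb => exact mul_mem_span_wA ha hb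

lemma mul_mem_span_wR {G : Type} {a b : Ar G} (ha : a ∈ Submodule.span ℚ (Set.range wR))
    (hb : b ∈ Submodule.span ℚ (Set.range wR)) :
    a * b ∈ Submodule.span ℚ (Set.range wR) := by
  induction ha using Submodule.span_induction with
  | mem x hx =>
    induction hb using Submodule.span_induction with
    | mem y hy =>
      obtain ⟨l1, rfl⟩ := hx
      obtain ⟨l2, rfl⟩ := hy
      exact Submodule.subset_span ⟨l2 ++ l1, wR_append l2 l1⟩
    | zero => rw [mul_zero]; exact Submodule.zero_mem _
    | add y z _ _ h1 h2 => rw [mul_add]; exact Submodule.add_mem _ h1 h2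
    | smul r y _ h1 => rw [mul_smul_comm]; exact Submodule.smul_mem _ _ h1
  | zero => rw [zero_mul]; exact Submodule.zero_mem _
  | add x y _ _ h1 h2 => rw [add_mul]; exact Submodule.add_mem _ h1 h2
  | smul r x _ h1 => rw [smul_mul_assoc]; exact Submodule.smul_mem _ _ h1

lemma mem_span_wR {G : Type} (w : Ar G) : w ∈ Submodule.span ℚ (Set.range wR) := by
  induction w using FreeAlgebra.induction with
  | grade0 r =>
    rw [Algebra.algebraMap_eq_smul_one]
    exact Submodule.smul_mem _ _ (Submodule.subset_span ⟨[], rfl⟩)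
  | grade1 a => exact Submodule.subset_span ⟨[a], by simp [wR]⟩
  | add a b ha hb => exact Submodule.add_mem _ ha hb
  | mul a b ha hb => exact mul_mem_span_wR ha hb

variable {G : Type} [CommGroup G]

lemma wordP_nil : wordP ([] : List (ℕ × G)) = 1 := rfl

lemma wordP_concat (L : List (ℕ × G)) (a : ℕ) (t : G) :
    wordP (L ++ [(a, t)]) = wordP L * (Xr ^ a * Yr t) := by
  simp [wordP]

lemma cumul_nil (g : G) : cumul g [] = [] := rfl

lemma cumul_concat_one (L : List (ℕ × G)) (g : G) (a : ℕ) (h : ∀ p ∈ L, p.2 = 1) :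
    cumul g (L ++ [(a, (1 : G))]) = cumul g L ++ [(a, g)] := by
  induction L generalizing g with
  | nil => simp [cumul]
  | cons p L ih =>
    have hp : p.2 = 1 := h p List.mem_cons_self
    simp only [List.cons_append, cumul, List.cons.injEq, true_and]
    rw [ih _ (fun q hq => h q (List.mem_cons_of_mem _ hq)), hp, mul_one]

lemma phi_Xr : phi (Xr : Ar G) = zet := by simp [phi, Xr]

lemma phi_Yr (t : G) : phi (Yr t) = zdel t - zet := by simp [phi, Yr]

lemma jm_X1 : (jm : A1 →ₐ[ℚ] Ar G) X1 = Xr := by simp [jm, X1]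

lemma jm_Y1 : (jm : A1 →ₐ[ℚ] Ar G) Y1 = Yr 1 := by simp [jm, Y1]

/-- The algebra map `a ↦ a ⋄_s 1`. -/
noncomputable def eps (s : G) : A1 →ₐ[ℚ] Ar G :=
  lift ℚ (fun l => match l with
    | LetA.x => zdel s
    | LetA.y => zet - zdel s)

lemma eps_X1 (s : G) : eps s X1 = zdel s := by simp [eps, X1]

lemma eps_Y1 (s : G) : eps s Y1 = zet - zdel s := by simp [eps, Y1]

end Stmt11
namespace Stmt11

set_option linter.unusedSectionVars false

variable {G : Type} [CommGroup G]

/-- The submodule spanned by words `x^{a1} y_1 ⋯ x^{al} y_1 x^a` (all subscripts `1`). -/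
noncomputable def BB : Submodule ℚ (Ar G) :=
  Submodule.span ℚ {w : Ar G | ∃ (L : List (ℕ × G)) (a : ℕ),
    (∀ p ∈ L, p.2 = 1) ∧ w = wordP L * Xr ^ a}

lemma BB_mul_Xr {b : Ar G} (hb : b ∈ BB) : b * Xr ∈ (BB : Submodule ℚ (Ar G)) := by
  induction hb using Submodule.span_induction with
  | mem x hx =>
    obtain ⟨L, a, h1, rfl⟩ := hx
    refine Submodule.subset_span ⟨L, a + 1, h1, ?_⟩
    rw [pow_succ, mul_assoc]
  | zero => rw [zero_mul]; exact Submodule.zero_mem _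
  | add x y _ _ h1 h2 => rw [add_mul]; exact Submodule.add_mem _ h1 h2
  | smul r x _ h1 => rw [smul_mul_assoc]; exact Submodule.smul_mem _ _ h1

lemma BB_mul_Yr1 {b : Ar G} (hb : b ∈ BB) : b * Yr 1 ∈ (BB : Submodule ℚ (Ar G)) := by
  induction hb using Submodule.span_induction with
  | mem x hx =>
    obtain ⟨L, a, h1, rfl⟩ := hx
    refine Submodule.subset_span ⟨L ++ [(a, 1)], 0, ?_, ?_⟩
    · intro p hp
      rcases List.mem_append.1 hp with h | h
      · exact h1 p h
      · simp at h; rw [h]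
    · rw [wordP_concat, pow_zero, mul_one, mul_assoc]
  | zero => rw [zero_mul]; exact Submodule.zero_mem _
  | add x y _ _ h1 h2 => rw [add_mul]; exact Submodule.add_mem _ h1 h2
  | smul r x _ h1 => rw [smul_mul_assoc]; exact Submodule.smul_mem _ _ h1

lemma zet_eq : (zet : Ar G) = Xr + Yr 1 := rfl

lemma zdel_one : (zdel 1 : Ar G) = Xr := if_pos rfl

lemma phi_jm_mem_BB (a : A1) : phi (jm a) ∈ (BB : Submodule ℚ (Ar G)) := by
  have h := mem_span_wA a
  induction h using Submodule.span_induction with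
  | mem x hx =>
    obtain ⟨l, rfl⟩ := hx
    induction l with
    | nil =>
      show phi (jm (1 : A1)) ∈ BB
      rw [map_one, map_one]
      refine Submodule.subset_span ⟨[], 0, by simp, by simp [wordP_nil]⟩
    | cons a' l ih =>
      cases a' with
      | x =>
        show phi (jm (wA l * X1)) ∈ BB
        rw [map_mul, map_mul, jm_X1, phi_Xr, zet_eq, mul_add]
        exact Submodule.add_mem _ (BB_mul_Xr ih) (BB_mul_Yr1 ih)
      | y =>
        show phi (jm (wA l * Y1)) ∈ BB
        rw [map_mul, map_mul, jm_Y1, phi_Yr, zdel_one]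
        have e : (Xr - zet : Ar G) = -(Yr 1) := by rw [zet_eq]; abel
        rw [e, mul_neg]
        exact Submodule.neg_mem _ (BB_mul_Yr1 ih)
  | zero => rw [map_zero, map_zero]; exact Submodule.zero_mem _
  | add x y _ _ h1 h2 => rw [map_add, map_add]; exact Submodule.add_mem _ h1 h2
  | smul r x _ h1 => rw [map_smul, map_smul]; exact Submodule.smul_mem _ _ h1

variable (S : DiamondSetup G)

lemma psi_one (s : G) : S.psi s 1 = 1 := by
  have h := S.psi_spec s [] 0
  simpa [wordP_nil, cumul_nil] using h

lemma psi_mul_Xr (s : G) {b : Ar G} (hb : b ∈ (BB : Submodule ℚ (Ar G))) :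
    S.psi s (b * Xr) = S.psi s b * zet := by
  induction hb using Submodule.span_induction with
  | mem x hx =>
    obtain ⟨L, a, h1, rfl⟩ := hx
    have e1 : wordP L * Xr ^ a * Xr = wordP L * Xr ^ (a + 1) := by
      rw [pow_succ, mul_assoc]
    rw [e1, S.psi_spec, S.psi_spec, pow_succ, ← mul_assoc, map_mul, phi_Xr]
  | zero => simp
  | add x y _ _ h1 h2 => rw [add_mul, map_add, h1, h2, map_add, add_mul]
  | smul r x _ h1 => rw [smul_mul_assoc, map_smul, h1, map_smul, smul_mul_assoc]

lemma psi_mul_Yr1 (s : G) {b : Ar G} (hb : b ∈ (BB : Submodule ℚ (Ar G))) :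
    S.psi s (b * Yr 1) = S.psi s b * (zdel s - zet) := by
  induction hb using Submodule.span_induction with
  | mem x hx =>
    obtain ⟨L, a, h1, rfl⟩ := hx
    have e1 : wordP L * Xr ^ a * Yr 1 = wordP (L ++ [(a, 1)]) * Xr ^ 0 := by
      rw [wordP_concat, pow_zero, mul_one, mul_assoc]
    rw [e1, S.psi_spec, cumul_concat_one L s a h1, wordP_concat, pow_zero, mul_one,
      ← mul_assoc, map_mul, phi_Yr, S.psi_spec]
  | zero => simp
  | add x y _ _ h1 h2 => rw [add_mul, map_add, h1, h2, map_add, add_mul]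
  | smul r x _ h1 => rw [smul_mul_assoc, map_smul, h1, map_smul, smul_mul_assoc]

lemma D_one_eq_eps (s : G) (a : A1) : S.D s a 1 = eps s a := by
  rw [S.D_one]
  have h := mem_span_wA a
  induction h using Submodule.span_induction with
  | mem x hx =>
    obtain ⟨l, rfl⟩ := hx
    induction l with
    | nil =>
      show S.psi s (phi (jm (1 : A1))) = eps s 1
      rw [map_one, map_one, psi_one, map_one]
    | cons a' l ih =>
      cases a' with
      | x =>
        show S.psi s (phi (jm (wA l * X1))) = eps s (wA l * X1)
        rw [map_mul, map_mul, jm_X1, phi_Xr, zet_eq, mul_add, map_add,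
          psi_mul_Xr S s (phi_jm_mem_BB (wA l)), psi_mul_Yr1 S s (phi_jm_mem_BB (wA l)), ih,
          map_mul (eps s) (wA l) X1, eps_X1]
        noncomm_ring
      | y =>
        show S.psi s (phi (jm (wA l * Y1))) = eps s (wA l * Y1)
        rw [map_mul, map_mul, jm_Y1, phi_Yr, zdel_one]
        have e : phi (jm (wA l)) * ((Xr : Ar G) - zet) = -(phi (jm (wA l)) * Yr 1) := by
          rw [zet_eq]; noncomm_ring
        rw [e, map_neg, psi_mul_Yr1 S s (phi_jm_mem_BB (wA l)), ih,
          map_mul (eps s) (wA l) Y1, eps_Y1]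
        noncomm_ring
  | zero => rw [map_zero, map_zero, map_zero, map_zero]
  | add x y _ _ h1 h2 => rw [map_add, map_add, map_add, h1, h2, map_add]
  | smul r x _ h1 => rw [map_smul, map_smul, map_smul, h1, map_smul]

end Stmt11
namespace Stmt11

set_option linter.unusedSectionVars false
set_option maxHeartbeats 1000000

variable {G : Type} [CommGroup G] (S : DiamondSetup G)

lemma D_zet_eq (s : G) (a : A1) : S.D s a zet = eps s a * zet := by
  have h := mem_span_wA a
  induction h using Submodule.span_induction with
  | mem x hx =>
    obtain ⟨l, rfl⟩ := hx
    induction l with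
    | nil =>
      show S.D s 1 zet = eps s 1 * zet
      rw [S.one_D, map_one, one_mul]
    | cons a' l ih =>
      cases a' with
      | x =>
        show S.D s (wA l * X1) zet = eps s (wA l * X1) * zet
        have h1 : S.D s (wA l * X1) Xr
            = S.D s (wA l) Xr * Xr - S.D s (wA l * Y1) 1 * Xr := by
          have h0 := S.Dxx s (wA l) 1; rwa [one_mul] at h0
        have h2 : S.D s (wA l * X1) (Yr 1)
            = S.D s (wA l) (Yr 1) * Xr + S.D s (wA l * X1) 1 * Yr 1 := by
          have h0 := S.Dxy s (wA l) 1; rwa [one_mul] at h0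
        have h3 : S.D s (wA l) Xr = eps s (wA l) * zet - S.D s (wA l) (Yr 1) := by
          rw [eq_sub_iff_add_eq, ← map_add, ← zet_eq, ih]
        rw [zet_eq, map_add, h1, h2, h3, D_one_eq_eps, D_one_eq_eps,
          map_mul (eps s) (wA l) X1, map_mul (eps s) (wA l) Y1, eps_X1, eps_Y1, zet_eq]
        noncomm_ring
      | y =>
        show S.D s (wA l * Y1) zet = eps s (wA l * Y1) * zet
        have h1 : S.D s (wA l * Y1) Xr
            = S.D s (wA l) Xr * Yr 1 + S.D s (wA l * Y1) 1 * Xr := by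
          have h0 := S.Dyx s (wA l) 1; rwa [one_mul] at h0
        have h2 : S.D s (wA l * Y1) (Yr 1)
            = S.D s (wA l) (Yr 1) * Yr 1 - S.D s (wA l * X1) 1 * Yr 1 := by
          have h0 := S.Dyy s (wA l) 1; rwa [one_mul] at h0
        have h3 : S.D s (wA l) Xr = eps s (wA l) * zet - S.D s (wA l) (Yr 1) := by
          rw [eq_sub_iff_add_eq, ← map_add, ← zet_eq, ih]
        rw [zet_eq, map_add, h1, h2, h3, D_one_eq_eps, D_one_eq_eps,
          map_mul (eps s) (wA l) X1, map_mul (eps s) (wA l) Y1, eps_X1, eps_Y1, zet_eq]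
        noncomm_ring
  | zero => simp
  | add x y _ _ h1 h2 => rw [map_add, LinearMap.add_apply, h1, h2, map_add, add_mul]
  | smul r x _ h1 => rw [map_smul, LinearMap.smul_apply, h1, map_smul, smul_mul_assoc]

/-- The statement of the theorem, as a predicate. -/
def Kd (s : G) (u v : A1) (w : Ar G) : Prop :=
  S.D s (u * v) (zet * w) =
    S.D s u 1 * S.D s v (zet * w) + zet * S.D s (u * v) w
      - zet * (S.D s u 1 * S.D s v w)

lemma Kd_one (s : G) (u v : A1) : Kd S s u v 1 := by
  unfold Kd
  simp only [mul_one]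
  rw [D_zet_eq, D_zet_eq, D_one_eq_eps, D_one_eq_eps, D_one_eq_eps, map_mul]
  noncomm_ring

lemma Kd_step_xx (s : G) (u v : A1) (w : Ar G)
    (h1 : Kd S s u v (w * Xr)) (h2 : Kd S s u (v * Y1) w) :
    Kd S s u (v * X1) (w * Xr) := by
  unfold Kd at h1 h2 ⊢
  simp only [← mul_assoc] at h1 h2 ⊢
  simp only [S.Dxx]
  rw [h1, h2]
  noncomm_ring

lemma Kd_step_yx (s : G) (u v : A1) (w : Ar G)
    (h1 : Kd S s u v (w * Xr)) (h2 : Kd S s u (v * Y1) w) :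
    Kd S s u (v * Y1) (w * Xr) := by
  unfold Kd at h1 h2 ⊢
  simp only [← mul_assoc] at h1 h2 ⊢
  simp only [S.Dyx]
  rw [h1, h2]
  noncomm_ring

lemma Kd_step_xy1 (s : G) (u v : A1) (w : Ar G)
    (h1 : Kd S s u v (w * Yr 1)) (h2 : Kd S s u (v * X1) w) :
    Kd S s u (v * X1) (w * Yr 1) := by
  unfold Kd at h1 h2 ⊢
  simp only [← mul_assoc] at h1 h2 ⊢
  simp only [S.Dxy]
  rw [h1, h2]
  noncomm_ring

lemma Kd_step_yy1 (s : G) (u v : A1) (w : Ar G)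
    (h1 : Kd S s u v (w * Yr 1)) (h2 : Kd S s u (v * X1) w) :
    Kd S s u (v * Y1) (w * Yr 1) := by
  unfold Kd at h1 h2 ⊢
  simp only [← mul_assoc] at h1 h2 ⊢
  simp only [S.Dyy]
  rw [h1, h2]
  noncomm_ring

lemma Kd_step_xyt (s t : G) (ht : t ≠ 1) (u v : A1) (w : Ar G)
    (h1 : Kd S s u v (w * Yr t)) (h2 : Kd S s u v (w * Xr))
    (h3 : Kd S s u (v * Y1) w) :
    Kd S s u (v * X1) (w * Yr t) := by
  unfold Kd at h1 h2 h3 ⊢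
  simp only [← mul_assoc] at h1 h2 h3 ⊢
  simp only [S.Dxyt s t ht, mul_add, map_add]
  rw [h1, h2, h3]
  noncomm_ring

lemma Kd_step_yyt (s t : G) (ht : t ≠ 1) (u v : A1) (w : Ar G)
    (h1 : Kd S s u v (w * Yr t)) (h2 : Kd S s u v (w * Xr))
    (h3 : Kd S s u (v * Y1) w) :
    Kd S s u (v * Y1) (w * Yr t) := by
  unfold Kd at h1 h2 h3 ⊢
  simp only [← mul_assoc] at h1 h2 h3 ⊢
  simp only [S.Dyyt s t ht, mul_add, map_add]
  rw [h1, h2, h3]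
  noncomm_ring

end Stmt11
namespace Stmt11

set_option linter.unusedSectionVars false
set_option maxHeartbeats 1000000

variable {G : Type} [CommGroup G] (S : DiamondSetup G)

lemma hz_eq (s : G) : S.D s X1 1 = zet - S.D s Y1 1 := by
  rw [D_one_eq_eps, D_one_eq_eps, eps_X1, eps_Y1]; abel

lemma DX1_mul_Xr (s : G) (w : Ar G) :
    S.D s X1 (w * Xr) = w * Xr * Xr - S.D s Y1 w * Xr := by
  have h := S.Dxx s 1 w
  simp only [one_mul, S.one_D] at h
  exact h

lemma DY1_mul_Xr (s : G) (w : Ar G) :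
    S.D s Y1 (w * Xr) = w * Xr * Yr 1 + S.D s Y1 w * Xr := by
  have h := S.Dyx s 1 w
  simp only [one_mul, S.one_D] at h
  exact h

lemma DX1_mul_Yr1 (s : G) (w : Ar G) :
    S.D s X1 (w * Yr 1) = w * Yr 1 * Xr + S.D s X1 w * Yr 1 := by
  have h := S.Dxy s 1 w
  simp only [one_mul, S.one_D] at h
  exact h

lemma DY1_mul_Yr1 (s : G) (w : Ar G) :
    S.D s Y1 (w * Yr 1) = w * Yr 1 * Yr 1 - S.D s X1 w * Yr 1 := by
  have h := S.Dyy s 1 w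
  simp only [one_mul, S.one_D] at h
  exact h

lemma DX1_mul_Yrt (s t : G) (ht : t ≠ 1) (w : Ar G) :
    S.D s X1 (w * Yr t)
      = w * Yr t * Xr + w * (Xr + Yr t) * Yr t - S.D s Y1 w * Yr t := by
  have h := S.Dxyt s t ht 1 w
  simp only [one_mul, S.one_D] at h
  exact h

lemma DY1_mul_Yrt (s t : G) (ht : t ≠ 1) (w : Ar G) :
    S.D s Y1 (w * Yr t)
      = w * Yr t * Yr 1 - w * (Xr + Yr t) * Yr t + S.D s Y1 w * Yr t := by
  have h := S.Dyyt s t ht 1 w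
  simp only [one_mul, S.one_D] at h
  exact h

lemma Kd_base_y_x (s : G) (w : Ar G) (h : Kd S s Y1 1 w) : Kd S s Y1 1 (w * Xr) := by
  unfold Kd at h ⊢
  simp only [mul_one, S.one_D, ← mul_assoc] at h ⊢
  rw [DY1_mul_Xr S s (zet * w), DY1_mul_Xr S s w, h]
  noncomm_ring

lemma Kd_base_x_x (s : G) (w : Ar G) (h : Kd S s Y1 1 w) : Kd S s X1 1 (w * Xr) := by
  unfold Kd at h ⊢
  simp only [mul_one, S.one_D, ← mul_assoc] at h ⊢
  rw [DX1_mul_Xr S s (zet * w), DX1_mul_Xr S s w, h, hz_eq]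
  noncomm_ring

lemma Kd_base_x_y1 (s : G) (w : Ar G) (h : Kd S s X1 1 w) : Kd S s X1 1 (w * Yr 1) := by
  unfold Kd at h ⊢
  simp only [mul_one, S.one_D, ← mul_assoc] at h ⊢
  rw [DX1_mul_Yr1 S s (zet * w), DX1_mul_Yr1 S s w, h]
  noncomm_ring

lemma Kd_base_y_y1 (s : G) (w : Ar G) (h : Kd S s X1 1 w) : Kd S s Y1 1 (w * Yr 1) := by
  unfold Kd at h ⊢
  simp only [mul_one, S.one_D, ← mul_assoc] at h ⊢
  rw [DY1_mul_Yr1 S s (zet * w), DY1_mul_Yr1 S s w, h, hz_eq]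
  noncomm_ring

lemma Kd_base_x_yt (s t : G) (ht : t ≠ 1) (w : Ar G) (h : Kd S s Y1 1 w) :
    Kd S s X1 1 (w * Yr t) := by
  unfold Kd at h ⊢
  simp only [mul_one, S.one_D, ← mul_assoc] at h ⊢
  rw [DX1_mul_Yrt S s t ht (zet * w), DX1_mul_Yrt S s t ht w, h, hz_eq]
  noncomm_ring

lemma Kd_base_y_yt (s t : G) (ht : t ≠ 1) (w : Ar G) (h : Kd S s Y1 1 w) :
    Kd S s Y1 1 (w * Yr t) := by
  unfold Kd at h ⊢
  simp only [mul_one, S.one_D, ← mul_assoc] at h ⊢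
  rw [DY1_mul_Yrt S s t ht (zet * w), DY1_mul_Yrt S s t ht w, h]
  noncomm_ring

end Stmt11
namespace Stmt11

set_option linter.unusedSectionVars false
set_option maxHeartbeats 1000000

variable {G : Type} [CommGroup G] (S : DiamondSetup G)

lemma wR_nil : (wR [] : Ar G) = 1 := rfl

lemma wR_cons_x (lw : List (LetR G)) : wR (LetR.x :: lw) = wR lw * Xr := rfl

lemma wR_cons_y (t : G) (lw : List (LetR G)) : wR (LetR.y t :: lw) = wR lw * Yr t := rfl

lemma wA_nil : (wA [] : A1) = 1 := rfl

lemma wA_cons_x (lv : List LetA) : wA (LetA.x :: lv) = wA lv * X1 := rfl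

lemma wA_cons_y (lv : List LetA) : wA (LetA.y :: lv) = wA lv * Y1 := rfl

lemma key (s : G) :
    ∀ (n : ℕ) (lv : List LetA) (lw : List (LetR G)), lv.length + lw.length ≤ n →
      Kd S s X1 (wA lv) (wR lw) ∧ Kd S s Y1 (wA lv) (wR lw) := by
  intro n
  induction n with
  | zero =>
    intro lv lw h
    have hv : lv = [] := List.length_eq_zero_iff.mp (by omega)
    have hw : lw = [] := List.length_eq_zero_iff.mp (by omega)
    subst hv; subst hw
    rw [wR_nil]
    exact ⟨Kd_one S s _ _, Kd_one S s _ _⟩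
  | succ n ih =>
    intro lv lw h
    cases lw with
    | nil =>
      rw [wR_nil]
      exact ⟨Kd_one S s _ _, Kd_one S s _ _⟩
    | cons b lw' =>
      cases lv with
      | nil =>
        have hm : ([] : List LetA).length + lw'.length ≤ n := by
          simp at h ⊢; omega
        have ihw := ih [] lw' hm
        rw [wA_nil] at ihw ⊢
        cases b with
        | x =>
          rw [wR_cons_x]
          exact ⟨Kd_base_x_x S s _ ihw.2, Kd_base_y_x S s _ ihw.2⟩
        | y t =>
          rw [wR_cons_y]
          by_cases ht : t = 1
          · subst ht
            exact ⟨Kd_base_x_y1 S s _ ihw.1, Kd_base_y_y1 S s _ ihw.1⟩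
          · exact ⟨Kd_base_x_yt S s t ht _ ihw.2, Kd_base_y_yt S s t ht _ ihw.2⟩
      | cons a lv' =>
        have hm1 : lv'.length + (LetR.x :: lw').length ≤ n := by simp at h ⊢; omega
        have hm2 : ∀ t : G, lv'.length + (LetR.y t :: lw').length ≤ n := by
          intro t; simp at h ⊢; omega
        have hm3 : (LetA.y :: lv').length + lw'.length ≤ n := by simp at h ⊢; omega
        have hm4 : (LetA.x :: lv').length + lw'.length ≤ n := by simp at h ⊢; omega
        cases a with
        | x =>
          rw [wA_cons_x]
          cases b with
          | x =>
            rw [wR_cons_x]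
            have h1 := ih lv' (LetR.x :: lw') hm1
            have h2 := ih (LetA.y :: lv') lw' hm3
            rw [wR_cons_x] at h1
            rw [wA_cons_y] at h2
            exact ⟨Kd_step_xx S s X1 _ _ h1.1 h2.1, Kd_step_xx S s Y1 _ _ h1.2 h2.2⟩
          | y t =>
            rw [wR_cons_y]
            by_cases ht : t = 1
            · subst ht
              have h1 := ih lv' (LetR.y 1 :: lw') (hm2 1)
              have h2 := ih (LetA.x :: lv') lw' hm4
              rw [wR_cons_y] at h1
              rw [wA_cons_x] at h2
              exact ⟨Kd_step_xy1 S s X1 _ _ h1.1 h2.1, Kd_step_xy1 S s Y1 _ _ h1.2 h2.2⟩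
            · have h1 := ih lv' (LetR.y t :: lw') (hm2 t)
              have h2 := ih lv' (LetR.x :: lw') hm1
              have h3 := ih (LetA.y :: lv') lw' hm3
              rw [wR_cons_y] at h1
              rw [wR_cons_x] at h2
              rw [wA_cons_y] at h3
              exact ⟨Kd_step_xyt S s t ht X1 _ _ h1.1 h2.1 h3.1,
                Kd_step_xyt S s t ht Y1 _ _ h1.2 h2.2 h3.2⟩
        | y =>
          rw [wA_cons_y]
          cases b with
          | x =>
            rw [wR_cons_x]
            have h1 := ih lv' (LetR.x :: lw') hm1
            have h2 := ih (LetA.y :: lv') lw' hm3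
            rw [wR_cons_x] at h1
            rw [wA_cons_y] at h2
            exact ⟨Kd_step_yx S s X1 _ _ h1.1 h2.1, Kd_step_yx S s Y1 _ _ h1.2 h2.2⟩
          | y t =>
            rw [wR_cons_y]
            by_cases ht : t = 1
            · subst ht
              have h1 := ih lv' (LetR.y 1 :: lw') (hm2 1)
              have h2 := ih (LetA.x :: lv') lw' hm4
              rw [wR_cons_y] at h1
              rw [wA_cons_x] at h2
              exact ⟨Kd_step_yy1 S s X1 _ _ h1.1 h2.1, Kd_step_yy1 S s Y1 _ _ h1.2 h2.2⟩
            · have h1 := ih lv' (LetR.y t :: lw') (hm2 t)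
              have h2 := ih lv' (LetR.x :: lw') hm1
              have h3 := ih (LetA.y :: lv') lw' hm3
              rw [wR_cons_y] at h1
              rw [wR_cons_x] at h2
              rw [wA_cons_y] at h3
              exact ⟨Kd_step_yyt S s t ht X1 _ _ h1.1 h2.1 h3.1,
                Kd_step_yyt S s t ht Y1 _ _ h1.2 h2.2 h3.2⟩

lemma Kd_word_all_w (s : G) (lv : List LetA) (w : Ar G) : Kd S s Y1 (wA lv) w := by
  have hw := mem_span_wR w
  induction hw using Submodule.span_induction with
  | mem x hx =>
    obtain ⟨lw, rfl⟩ := hx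
    exact (key S s (lv.length + lw.length) lv lw le_rfl).2
  | zero => unfold Kd; simp
  | add x y _ _ h1 h2 =>
    unfold Kd at h1 h2 ⊢
    simp only [mul_add, map_add]
    rw [h1, h2]
    noncomm_ring
  | smul r x _ h1 =>
    unfold Kd at h1 ⊢
    simp only [mul_smul_comm, map_smul]
    rw [h1]
    simp only [smul_add, smul_sub, mul_smul_comm]

lemma Kd_final (s : G) (v : A1) (w : Ar G) : Kd S s Y1 v w := by
  have hv := mem_span_wA v
  induction hv using Submodule.span_induction with
  | mem x hx =>
    obtain ⟨lv, rfl⟩ := hx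
    exact Kd_word_all_w S s lv w
  | zero =>
    unfold Kd
    simp
  | add x y _ _ h1 h2 =>
    unfold Kd at h1 h2 ⊢
    simp only [mul_add, map_add, LinearMap.add_apply]
    rw [h1, h2]
    noncomm_ring
  | smul r x _ h1 =>
    unfold Kd at h1 ⊢
    simp only [mul_smul_comm, map_smul, LinearMap.smul_apply]
    rw [h1]
    simp only [smul_add, smul_sub, mul_smul_comm]

end Stmt11


/-- For all `s ∈ μ_r`, `v ∈ A_1`, `w ∈ A_r`:
`(yv) ⋄_s (zw) = (y ⋄_s 1)(v ⋄_s zw) + z(yv ⋄_s w) − z(y ⋄_s 1)(v ⋄_s w)`. -/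
theorem statement11 {G : Type} [CommGroup G] (S : DiamondSetup G)
    (s : G) (v : A1) (w : Ar G) :
    S.D s (Y1 * v) (zet * w) =
      S.D s Y1 1 * S.D s v (zet * w) + zet * S.D s (Y1 * v) w
        - zet * (S.D s Y1 1 * S.D s v w) := by
  have h := Stmt11.Kd_final S s v w
  unfold Stmt11.Kd at h
  exact h
end

section
/- For all s, t ∈ μ_r, v ∈ A_1, and w ∈ A_r: (yv) ⋄_s (z_t^δ w) = (y ⋄_s 1)(v ⋄_s z_t^δ w) + z_t^δ(yv ⋄_t w). -/
open FreeAlgebra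

variable {G : Type} [CommGroup G]

namespace Stmt12Aux

variable {G : Type} [CommGroup G]

lemma zet_def : (zet : Ar G) = Xr + Yr 1 := rfl

lemma zdel_one : zdel (1 : G) = Xr := by simp [zdel]

lemma zdel_ne (t : G) (ht : t ≠ 1) : zdel t = Xr + Yr t := by simp [zdel, ht]

lemma phi_Xr : phi (G := G) Xr = zet := by simp [phi, Xr, lift_ι_apply]

lemma phi_Yr (u : G) : phi (Yr u) = zdel u - zet := by simp [phi, Yr, lift_ι_apply]

lemma jm_X : (jm (G := G)) X1 = Xr := by simp [jm, X1, lift_ι_apply]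

lemma jm_Y : (jm (G := G)) Y1 = Yr 1 := by simp [jm, Y1, lift_ι_apply]

lemma wordP_nil : wordP ([] : List (ℕ × G)) = 1 := rfl

lemma wordP_cons (p : ℕ × G) (L : List (ℕ × G)) :
    wordP (p :: L) = (Xr ^ p.1 * Yr p.2) * wordP L := by simp [wordP]

lemma wordP_append (L M : List (ℕ × G)) : wordP (L ++ M) = wordP L * wordP M := by
  simp [wordP]

/-- product of the subscripts -/
def prodSnd (L : List (ℕ × G)) : G := (L.map Prod.snd).prod

lemma prodSnd_eq_one {L : List (ℕ × G)} (h : ∀ p ∈ L, p.2 = (1 : G)) :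
    prodSnd L = 1 := by
  apply List.prod_eq_one
  intro x hx
  obtain ⟨p, hp, rfl⟩ := List.mem_map.mp hx
  exact h p hp

lemma cumul_append (g : G) (L M : List (ℕ × G)) :
    cumul g (L ++ M) = cumul g L ++ cumul (g * prodSnd L) M := by
  induction L generalizing g with
  | nil => simp [cumul, prodSnd]
  | cons p L ih => simp [cumul, ih, prodSnd, mul_assoc]

/-- closure of a span under multiplication -/
lemma span_mul_mem {A : Type*} [Ring A] [Algebra ℚ A] {T : Set A}
    (hT : ∀ x ∈ T, ∀ y ∈ T, x * y ∈ T) {a b : A}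
    (ha : a ∈ Submodule.span ℚ T) (hb : b ∈ Submodule.span ℚ T) :
    a * b ∈ Submodule.span ℚ T := by
  refine Submodule.span_induction₂ (p := fun x y _ _ => x * y ∈ Submodule.span ℚ T)
    ?_ ?_ ?_ ?_ ?_ ?_ ?_ ha hb
  · exact fun x y hx hy => Submodule.subset_span (hT x hx y hy)
  · intro y hy; simp
  · intro x hx; simp
  · intro x y z _ _ _ h1 h2; rw [add_mul]; exact add_mem h1 h2
  · intro x y z _ _ _ h1 h2; rw [mul_add]; exact add_mem h1 h2
  · intro r x y _ _ h; rw [smul_mul_assoc]; exact Submodule.smul_mem _ _ h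
  · intro r x y _ _ h; rw [mul_smul_comm]; exact Submodule.smul_mem _ _ h

/-- the set of generators `wordP L * Xr ^ a` -/
def genW (G : Type) [CommGroup G] : Set (Ar G) :=
  {u | ∃ (L : List (ℕ × G)) (a : ℕ), u = wordP L * Xr ^ a}

lemma genW_mul {u v : Ar G} (hu : u ∈ genW G) (hv : v ∈ genW G) : u * v ∈ genW G := by
  obtain ⟨L, a, rfl⟩ := hu
  obtain ⟨M, b, rfl⟩ := hv
  cases M with
  | nil => exact ⟨L, a + b, by simp [wordP_nil, pow_add, mul_assoc]⟩
  | cons p M =>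
      exact ⟨L ++ (a + p.1, p.2) :: M, b, by
        simp [wordP_append, wordP_cons, pow_add, mul_assoc]⟩

lemma mem_span_genW (u : Ar G) : u ∈ Submodule.span ℚ (genW G) := by
  induction u using FreeAlgebra.induction with
  | grade0 r =>
      rw [Algebra.algebraMap_eq_smul_one]
      exact Submodule.smul_mem _ _
        (Submodule.subset_span ⟨[], 0, by simp [wordP_nil]⟩)
  | grade1 l =>
      cases l with
      | x => exact Submodule.subset_span ⟨[], 1, by simp [wordP_nil, Xr]⟩
      | y u => exact Submodule.subset_span ⟨[(0, u)], 0, by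
          simp [wordP_cons, wordP_nil, Yr]⟩
  | mul a b ha hb => exact span_mul_mem (fun x hx y hy => genW_mul hx hy) ha hb
  | add a b ha hb => exact add_mem ha hb

/-- `ψ_s(u x) = ψ_s(u) z` for every `u`. -/
lemma psi_mul_Xr (S : DiamondSetup G) (s : G) (u : Ar G) :
    S.psi s (u * Xr) = S.psi s u * zet := by
  induction mem_span_genW u using Submodule.span_induction with
  | mem x hx =>
      obtain ⟨L, a, rfl⟩ := hx
      rw [mul_assoc, ← pow_succ, S.psi_spec, S.psi_spec, pow_succ, ← mul_assoc,
        map_mul, phi_Xr]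
  | zero => simp
  | add x y hx hy ihx ihy => simp only [add_mul, map_add, ihx, ihy]
  | smul r x hx ih => simp only [smul_mul_assoc, map_smul, ih]

/-- `ψ_s(y_1 u) = (z_s^δ - z) ψ_s(u)` for every `u`. -/
lemma psi_Yr_mul (S : DiamondSetup G) (s : G) (u : Ar G) :
    S.psi s (Yr 1 * u) = (zdel s - zet) * S.psi s u := by
  induction mem_span_genW u using Submodule.span_induction with
  | mem x hx =>
      obtain ⟨L, a, rfl⟩ := hx
      have h : Yr 1 * (wordP L * Xr ^ a) = wordP ((0, (1:G)) :: L) * Xr ^ a := by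
        rw [wordP_cons]; simp [mul_assoc]
      have h2 : cumul s ((0, (1:G)) :: L) = (0, s) :: cumul s L := by simp [cumul]
      rw [h, S.psi_spec, h2, wordP_cons]
      simp only [pow_zero, one_mul]
      rw [mul_assoc, map_mul, phi_Yr, ← S.psi_spec]
  | zero => simp
  | add x y hx hy ihx ihy => simp only [mul_add, map_add, ihx, ihy]
  | smul r x hx ih => simp only [mul_smul_comm, map_smul, ih]

/-- generators with all subscripts equal to `1` -/
def genW1 (G : Type) [CommGroup G] : Set (Ar G) :=
  {u | ∃ (L : List (ℕ × G)) (a : ℕ), (∀ p ∈ L, p.2 = (1 : G)) ∧ u = wordP L * Xr ^ a}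

lemma genW1_mul {u v : Ar G} (hu : u ∈ genW1 G) (hv : v ∈ genW1 G) : u * v ∈ genW1 G := by
  obtain ⟨L, a, hL, rfl⟩ := hu
  obtain ⟨M, b, hM, rfl⟩ := hv
  cases M with
  | nil => exact ⟨L, a + b, hL, by simp [wordP_nil, pow_add, mul_assoc]⟩
  | cons p M =>
      refine ⟨L ++ (a + p.1, p.2) :: M, b, ?_, by
        simp [wordP_append, wordP_cons, pow_add, mul_assoc]⟩
      intro q hq
      rcases List.mem_append.mp hq with h | h
      · exact hL q h
      · rcases List.mem_cons.mp h with h | h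
        · rw [h]; exact hM p List.mem_cons_self
        · exact hM q (List.mem_cons_of_mem _ h)

lemma phijm_mem (v : A1) : phi (jm v) ∈ Submodule.span ℚ (genW1 G) := by
  induction v using FreeAlgebra.induction with
  | grade0 r =>
      rw [AlgHom.commutes, AlgHom.commutes, Algebra.algebraMap_eq_smul_one]
      refine Submodule.smul_mem _ _ (Submodule.subset_span ?_)
      exact ⟨([] : List (ℕ × G)), 0, fun p hp => by simp at hp, by simp [wordP_nil]⟩
  | grade1 l =>
      cases l with
      | x =>
          have : phi (jm (ι ℚ LetA.x)) = (Xr + Yr 1 : Ar G) := by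
            rw [show (ι ℚ LetA.x : A1) = X1 from rfl, jm_X, phi_Xr, zet_def]
          rw [this]
          refine add_mem (Submodule.subset_span ?_) (Submodule.subset_span ?_)
          · exact ⟨([] : List (ℕ × G)), 1, fun p hp => by simp at hp,
              by simp [wordP_nil]⟩
          · exact ⟨[(0, (1:G))], 0, fun p hp => by simp at hp; simp [hp],
              by simp [wordP_cons, wordP_nil]⟩
      | y =>
          have : phi (jm (ι ℚ LetA.y)) = -(Yr 1 : Ar G) := by
            rw [show (ι ℚ LetA.y : A1) = Y1 from rfl, jm_Y, phi_Yr, zdel_one, zet_def]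
            abel
          rw [this]
          refine neg_mem (Submodule.subset_span ?_)
          exact ⟨[(0, (1:G))], 0, fun p hp => by simp at hp; simp [hp],
            by simp [wordP_cons, wordP_nil]⟩
  | mul a b ha hb =>
      rw [map_mul, map_mul]
      exact span_mul_mem (fun x hx y hy => genW1_mul hx hy) ha hb
  | add a b ha hb => rw [map_add, map_add]; exact add_mem ha hb

/-- `ψ_s(u y_1) = ψ_s(u)(z_s^δ - z)` for `u` in the image of `A_1`. -/
lemma psi_mul_Y1 (S : DiamondSetup G) (s : G) {u : Ar G}
    (hu : u ∈ Submodule.span ℚ (genW1 G)) :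
    S.psi s (u * Yr 1) = S.psi s u * (zdel s - zet) := by
  induction hu using Submodule.span_induction with
  | mem x hx =>
      obtain ⟨L, a, hL, rfl⟩ := hx
      have key : (wordP L * Xr ^ a) * Yr 1 = wordP (L ++ [(a, (1:G))]) * Xr ^ 0 := by
        simp [wordP_append, wordP_cons, wordP_nil, mul_assoc]
      have hc : cumul s (L ++ [(a, (1:G))]) = cumul s L ++ [(a, s)] := by
        rw [cumul_append, prodSnd_eq_one hL]
        simp [cumul]
      rw [key, S.psi_spec, hc]
      simp only [pow_zero, mul_one]
      rw [wordP_append, wordP_cons, wordP_nil, mul_one, ← mul_assoc, map_mul,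
        phi_Yr, ← S.psi_spec]
  | zero => simp
  | add x y hx hy ihx ihy => simp only [add_mul, map_add, ihx, ihy]
  | smul r x hx ih => simp only [smul_mul_assoc, map_smul, ih]

lemma iota_ax : (ι ℚ LetA.x : A1) = X1 := rfl
lemma iota_ay : (ι ℚ LetA.y : A1) = Y1 := rfl
lemma iota_rx : (ι ℚ LetR.x : Ar G) = Xr := rfl
lemma iota_ry (u : G) : (ι ℚ (LetR.y u) : Ar G) = Yr u := rfl

lemma psi_one (S : DiamondSetup G) (s : G) : S.psi s (1 : Ar G) = 1 := by
  have h := S.psi_spec s [] 0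
  simpa [wordP_nil, cumul] using h

lemma D_Y1_one (S : DiamondSetup G) (s : G) : S.D s Y1 1 = zet - zdel s := by
  rw [S.D_one, jm_Y, phi_Yr, zdel_one]
  have h : (Xr : Ar G) - zet = -(Yr 1 * 1) := by rw [zet_def]; noncomm_ring
  rw [h, map_neg, psi_Yr_mul, psi_one, mul_one, neg_sub]

lemma D_mul_X_one (S : DiamondSetup G) (s : G) (v : A1) :
    S.D s (v * X1) 1 = S.D s v 1 * zdel s := by
  rw [S.D_one, S.D_one, map_mul, jm_X, map_mul, phi_Xr, zet_def, mul_add, map_add,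
    psi_mul_Xr, psi_mul_Y1 S s (phijm_mem v)]
  noncomm_ring

lemma D_mul_Y_one (S : DiamondSetup G) (s : G) (v : A1) :
    S.D s (v * Y1) 1 = S.D s v 1 * (zet - zdel s) := by
  rw [S.D_one, S.D_one, map_mul, jm_Y, map_mul, phi_Yr, zdel_one]
  have h : (phi (jm v) * (Xr - zet) : Ar G) = -(phi (jm v) * Yr 1) := by
    rw [zet_def]; noncomm_ring
  rw [h, map_neg, psi_mul_Y1 S s (phijm_mem v), ← mul_neg, neg_sub]

lemma D_Y_mul_one (S : DiamondSetup G) (s : G) (v : A1) :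
    S.D s (Y1 * v) 1 = S.D s Y1 1 * S.D s v 1 := by
  rw [D_Y1_one, S.D_one, S.D_one, map_mul, jm_Y, map_mul, phi_Yr, zdel_one]
  have h : ((Xr - zet) * phi (jm v) : Ar G) = -(Yr 1 * phi (jm v)) := by
    rw [zet_def]; noncomm_ring
  rw [h, map_neg, psi_Yr_mul, ← neg_mul, neg_sub]

/-- generators: `1` together with all `u * letter` -/
def genI (G : Type) [CommGroup G] : Set (Ar G) :=
  {u | u = 1 ∨ ∃ (u' : Ar G) (l : LetR G), u = u' * ι ℚ l}

lemma mem_span_genI (u : Ar G) : u ∈ Submodule.span ℚ (genI G) := by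
  induction u using FreeAlgebra.induction with
  | grade0 r =>
      rw [Algebra.algebraMap_eq_smul_one]
      exact Submodule.smul_mem _ _ (Submodule.subset_span (Or.inl rfl))
  | grade1 l => exact Submodule.subset_span (Or.inr ⟨1, l, (one_mul _).symm⟩)
  | add a b ha hb => exact add_mem ha hb
  | mul a b ha hb =>
      induction hb using Submodule.span_induction with
      | mem x hx =>
          rcases hx with rfl | ⟨u', l, rfl⟩
          · rw [mul_one]; exact ha
          · rw [← mul_assoc]; exact Submodule.subset_span (Or.inr ⟨a * u', l, rfl⟩)
      | zero => rw [mul_zero]; exact zero_mem _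
      | add x y hx hy ihx ihy => rw [mul_add]; exact add_mem ihx ihy
      | smul r x hx ih => rw [mul_smul_comm]; exact Submodule.smul_mem _ _ ih

/-- `(v z) ⋄_s u = (v ⋄_s u) z`. -/
lemma D_zed (S : DiamondSetup G) (s : G) (v : A1) (u : Ar G) :
    S.D s (v * (X1 + Y1)) u = S.D s v u * zet := by
  induction mem_span_genI u using Submodule.span_induction with
  | mem x hx =>
      rcases hx with rfl | ⟨u', l, rfl⟩
      · rw [mul_add, map_add, LinearMap.add_apply, D_mul_X_one, D_mul_Y_one]
        noncomm_ring
      · cases l with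
        | x =>
            rw [iota_rx, mul_add, map_add, LinearMap.add_apply, S.Dxx, S.Dyx, zet_def]
            noncomm_ring
        | y u0 =>
            by_cases h0 : u0 = 1
            · subst h0
              rw [iota_ry, mul_add, map_add, LinearMap.add_apply, S.Dxy, S.Dyy, zet_def]
              noncomm_ring
            · rw [iota_ry, mul_add, map_add, LinearMap.add_apply,
                S.Dxyt s u0 h0, S.Dyyt s u0 h0, zet_def]
              noncomm_ring
  | zero => simp
  | add x y hx hy ihx ihy => simp only [map_add, ihx, ihy, add_mul]
  | smul r x hx ih => simp only [map_smul, ih, smul_mul_assoc]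

lemma D_X1_eq (S : DiamondSetup G) (s : G) (u : Ar G) :
    S.D s X1 u = u * zet - S.D s Y1 u := by
  have h := D_zed S s 1 u
  rw [one_mul, map_add, LinearMap.add_apply, S.one_D] at h
  exact eq_sub_of_add_eq h

/-- `(v x) ⋄_s z_t^δ` for `t ≠ 1`. -/
lemma Dx_zdel (S : DiamondSetup G) (s : G) {t : G} (ht : t ≠ 1) (v' : A1) :
    S.D s (v' * X1) (zdel t) =
      S.D s v' (zdel t) * zdel t - S.D s (v' * Y1) 1 * zdel t := by
  have h1 := S.Dxx s v' 1
  have h2 := S.Dxyt s t ht v' 1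
  simp only [one_mul] at h1 h2
  rw [zdel_ne t ht]
  simp only [map_add]
  rw [h1, h2]
  simp only [map_add]
  noncomm_ring

/-- `(v y) ⋄_s z_t^δ` for `t ≠ 1`. -/
lemma Dy_zdel (S : DiamondSetup G) (s : G) {t : G} (ht : t ≠ 1) (v' : A1) :
    S.D s (v' * Y1) (zdel t) =
      S.D s v' (zdel t) * (Yr 1 - Yr t) + S.D s (v' * Y1) 1 * zdel t := by
  have h1 := S.Dyx s v' 1
  have h2 := S.Dyyt s t ht v' 1
  simp only [one_mul] at h1 h2
  rw [zdel_ne t ht]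
  simp only [map_add]
  rw [h1, h2]
  simp only [map_add]
  noncomm_ring

/-- monomials of `A_1` -/
noncomputable def mv (L : List LetA) : A1 := (L.map (ι ℚ)).prod

/-- monomials of `A_r` -/
noncomputable def mw (L : List (LetR G)) : Ar G := (L.map (ι ℚ)).prod

lemma mv_nil : mv [] = 1 := rfl
lemma mw_nil : mw ([] : List (LetR G)) = 1 := rfl

lemma mv_concat (L : List LetA) (l : LetA) : mv (L ++ [l]) = mv L * ι ℚ l := by
  simp [mv]

lemma mw_concat (L : List (LetR G)) (l : LetR G) : mw (L ++ [l]) = mw L * ι ℚ l := by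
  simp [mw]

lemma mv_append (L M : List LetA) : mv (L ++ M) = mv L * mv M := by simp [mv]
lemma mw_append (L M : List (LetR G)) : mw (L ++ M) = mw L * mw M := by simp [mw]

lemma mem_span_mv (v : A1) : v ∈ Submodule.span ℚ (Set.range mv) := by
  induction v using FreeAlgebra.induction with
  | grade0 r =>
      rw [Algebra.algebraMap_eq_smul_one]
      exact Submodule.smul_mem _ _ (Submodule.subset_span ⟨[], rfl⟩)
  | grade1 l => exact Submodule.subset_span ⟨[l], by simp [mv]⟩
  | mul a b ha hb =>
      refine span_mul_mem ?_ ha hb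
      rintro x ⟨L, rfl⟩ y ⟨M, rfl⟩
      exact ⟨L ++ M, mv_append L M⟩
  | add a b ha hb => exact add_mem ha hb

lemma mem_span_mw (w : Ar G) : w ∈ Submodule.span ℚ (Set.range (mw (G := G))) := by
  induction w using FreeAlgebra.induction with
  | grade0 r =>
      rw [Algebra.algebraMap_eq_smul_one]
      exact Submodule.smul_mem _ _ (Submodule.subset_span ⟨[], rfl⟩)
  | grade1 l => exact Submodule.subset_span ⟨[l], by simp [mw]⟩
  | mul a b ha hb =>
      refine span_mul_mem ?_ ha hb
      rintro x ⟨L, rfl⟩ y ⟨M, rfl⟩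
      exact ⟨L ++ M, mw_append L M⟩
  | add a b ha hb => exact add_mem ha hb

/-- The statement on monomials, by lexicographic induction on the lengths. -/
theorem key (S : DiamondSetup G) (s t : G) (Lw : List (LetR G)) (Lv : List LetA) :
    S.D s (Y1 * mv Lv) (zdel t * mw Lw) =
      S.D s Y1 1 * S.D s (mv Lv) (zdel t * mw Lw) +
        zdel t * S.D t (Y1 * mv Lv) (mw Lw) := by
  rcases List.eq_nil_or_concat Lw with rfl | ⟨L₀, l, rfl⟩
  · -- base case `w = 1`
    rcases List.eq_nil_or_concat Lv with rfl | ⟨Lv₀, lv, rfl⟩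
    · -- `v = 1`
      by_cases ht : t = 1
      · subst ht
        simp only [mv_nil, mw_nil, mul_one, S.one_D, zdel_one]
        have e := S.Dyx s 1 1
        simp only [one_mul, S.one_D] at e
        rw [e, D_Y1_one S s, D_Y1_one S 1, zdel_one, zet_def]
        noncomm_ring
      · simp only [mv_nil, mw_nil, mul_one, S.one_D, zdel_ne t ht, map_add]
        have e1 := S.Dyx s 1 1
        have e2 := S.Dyyt s t ht 1 1
        simp only [one_mul, S.one_D] at e1 e2
        rw [e1, e2, D_Y1_one S t, zdel_ne t ht, zet_def]
        noncomm_ring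
    · -- `v = v₀ · letter`
      simp only [List.concat_eq_append, mv_concat, mw_nil, mul_one, ← mul_assoc]
      have ih := key S s t [] Lv₀
      simp only [mw_nil, mul_one] at ih
      have f0 : S.D s (Y1 * mv Lv₀ * Y1) 1 = S.D s Y1 1 * S.D s (mv Lv₀ * Y1) 1 := by
        rw [mul_assoc, D_Y_mul_one]
      by_cases ht : t = 1
      · subst ht
        simp only [zdel_one] at ih ⊢
        cases lv with
        | x =>
          simp only [iota_ax]
          have e1 := S.Dxx s (Y1 * mv Lv₀) 1
          have e2 := S.Dxx s (mv Lv₀) 1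
          simp only [one_mul] at e1 e2
          have e3 : S.D 1 (Y1 * mv Lv₀ * X1) 1 = S.D 1 (Y1 * mv Lv₀) 1 * Xr := by
            rw [D_mul_X_one, zdel_one]
          rw [e1, e2, e3, ih, f0]
          noncomm_ring
        | y =>
          simp only [iota_ay]
          have e1 := S.Dyx s (Y1 * mv Lv₀) 1
          have e2 := S.Dyx s (mv Lv₀) 1
          simp only [one_mul] at e1 e2
          have e3 : S.D 1 (Y1 * mv Lv₀ * Y1) 1 =
              S.D 1 (Y1 * mv Lv₀) 1 * (zet - zdel 1) := D_mul_Y_one S 1 _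
          rw [e1, e2, e3, ih, f0, zdel_one, zet_def]
          noncomm_ring
      · cases lv with
        | x =>
          simp only [iota_ax]
          have e3 : S.D t (Y1 * mv Lv₀ * X1) 1 =
              S.D t (Y1 * mv Lv₀) 1 * zdel t := D_mul_X_one S t _
          rw [Dx_zdel S s ht (Y1 * mv Lv₀), Dx_zdel S s ht (mv Lv₀), e3, ih, f0]
          noncomm_ring
        | y =>
          simp only [iota_ay]
          have e3 : S.D t (Y1 * mv Lv₀ * Y1) 1 =
              S.D t (Y1 * mv Lv₀) 1 * (zet - zdel t) := D_mul_Y_one S t _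
          rw [Dy_zdel S s ht (Y1 * mv Lv₀), Dy_zdel S s ht (mv Lv₀), e3, ih, f0,
            zet_def, zdel_ne t ht]
          noncomm_ring
  · -- step case `w = w₀ · letter`
    cases l with
    | x =>
      simp only [List.concat_eq_append, mw_concat, iota_rx, ← mul_assoc]
      rcases List.eq_nil_or_concat Lv with rfl | ⟨Lv₀, lv, rfl⟩
      · simp only [mv_nil, mul_one, S.one_D]
        have e1 := S.Dyx s 1 (zdel t * mw L₀)
        have e2 := S.Dyx t 1 (mw L₀)
        simp only [one_mul, S.one_D] at e1 e2
        have ih := key S s t L₀ []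
        simp only [mv_nil, mul_one, S.one_D] at ih
        rw [e1, e2, ih]
        noncomm_ring
      · simp only [List.concat_eq_append, mv_concat, ← mul_assoc]
        have ih1 := key S s t (L₀ ++ [LetR.x]) Lv₀
        simp only [mw_concat, iota_rx, ← mul_assoc] at ih1
        have ih2 := key S s t L₀ (Lv₀ ++ [LetA.y])
        simp only [mv_concat, iota_ay, ← mul_assoc] at ih2
        cases lv with
        | x =>
          simp only [iota_ax]
          rw [S.Dxx s (Y1 * mv Lv₀) (zdel t * mw L₀), S.Dxx s (mv Lv₀) (zdel t * mw L₀),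
            S.Dxx t (Y1 * mv Lv₀) (mw L₀), ih1, ih2]
          noncomm_ring
        | y =>
          simp only [iota_ay]
          rw [S.Dyx s (Y1 * mv Lv₀) (zdel t * mw L₀), S.Dyx s (mv Lv₀) (zdel t * mw L₀),
            S.Dyx t (Y1 * mv Lv₀) (mw L₀), ih1, ih2]
          noncomm_ring
    | y u =>
      by_cases hu : u = 1
      · subst hu
        simp only [List.concat_eq_append, mw_concat, iota_ry, ← mul_assoc]
        rcases List.eq_nil_or_concat Lv with rfl | ⟨Lv₀, lv, rfl⟩
        · simp only [mv_nil, mul_one, S.one_D]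
          have e1 := S.Dyy s 1 (zdel t * mw L₀)
          have e2 := S.Dyy t 1 (mw L₀)
          simp only [one_mul, S.one_D] at e1 e2
          have ex1 := D_X1_eq S s (zdel t * mw L₀)
          have ex2 := D_X1_eq S t (mw L₀)
          have ih := key S s t L₀ []
          simp only [mv_nil, mul_one, S.one_D] at ih
          rw [e1, e2, ex1, ex2, ih]
          noncomm_ring
        · simp only [List.concat_eq_append, mv_concat, ← mul_assoc]
          have ih1 := key S s t (L₀ ++ [LetR.y 1]) Lv₀
          simp only [mw_concat, iota_ry, ← mul_assoc] at ih1
          have ih2 := key S s t L₀ (Lv₀ ++ [LetA.x])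
          simp only [mv_concat, iota_ax, ← mul_assoc] at ih2
          cases lv with
          | x =>
            simp only [iota_ax]
            rw [S.Dxy s (Y1 * mv Lv₀) (zdel t * mw L₀), S.Dxy s (mv Lv₀) (zdel t * mw L₀),
              S.Dxy t (Y1 * mv Lv₀) (mw L₀), ih1, ih2]
            noncomm_ring
          | y =>
            simp only [iota_ay]
            rw [S.Dyy s (Y1 * mv Lv₀) (zdel t * mw L₀), S.Dyy s (mv Lv₀) (zdel t * mw L₀),
              S.Dyy t (Y1 * mv Lv₀) (mw L₀), ih1, ih2]
            noncomm_ring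
      · simp only [List.concat_eq_append, mw_concat, iota_ry, ← mul_assoc]
        rcases List.eq_nil_or_concat Lv with rfl | ⟨Lv₀, lv, rfl⟩
        · simp only [mv_nil, mul_one, S.one_D]
          have e1 := S.Dyyt s u hu 1 (zdel t * mw L₀)
          have e2 := S.Dyyt t u hu 1 (mw L₀)
          simp only [one_mul, S.one_D] at e1 e2
          have ih := key S s t L₀ []
          simp only [mv_nil, mul_one, S.one_D] at ih
          rw [e1, e2, ih]
          noncomm_ring
        · simp only [List.concat_eq_append, mv_concat, ← mul_assoc]
          have ih1 := key S s t (L₀ ++ [LetR.y u]) Lv₀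
          simp only [mw_concat, iota_ry, ← mul_assoc] at ih1
          have ih2 := key S s t (L₀ ++ [LetR.x]) Lv₀
          simp only [mw_concat, iota_rx, ← mul_assoc] at ih2
          have ih3 := key S s t L₀ (Lv₀ ++ [LetA.y])
          simp only [mv_concat, iota_ay, ← mul_assoc] at ih3
          cases lv with
          | x =>
            simp only [iota_ax]
            rw [S.Dxyt s u hu (Y1 * mv Lv₀) (zdel t * mw L₀),
              S.Dxyt s u hu (mv Lv₀) (zdel t * mw L₀),
              S.Dxyt t u hu (Y1 * mv Lv₀) (mw L₀)]
            simp only [mul_add, map_add, ← mul_assoc]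
            rw [ih1, ih2, ih3]
            noncomm_ring
          | y =>
            simp only [iota_ay]
            rw [S.Dyyt s u hu (Y1 * mv Lv₀) (zdel t * mw L₀),
              S.Dyyt s u hu (mv Lv₀) (zdel t * mw L₀),
              S.Dyyt t u hu (Y1 * mv Lv₀) (mw L₀)]
            simp only [mul_add, map_add, ← mul_assoc]
            rw [ih1, ih2, ih3]
            noncomm_ring
termination_by (Lw.length, Lv.length)
decreasing_by all_goals subst_vars <;> simp [Prod.lex_def, List.concat_eq_append] <;> omega

end Stmt12Aux

/-- For all `s, t ∈ μ_r`, `v ∈ A_1`, `w ∈ A_r`: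
`(yv) ⋄_s (z_t^δ w) = (y ⋄_s 1)(v ⋄_s z_t^δ w) + z_t^δ(yv ⋄_t w)`. -/
theorem statement12 {G : Type} [CommGroup G] (S : DiamondSetup G)
    (s t : G) (v : A1) (w : Ar G) :
    S.D s (Y1 * v) (zdel t * w) =
      S.D s Y1 1 * S.D s v (zdel t * w) + zdel t * S.D t (Y1 * v) w := by
  induction Stmt12Aux.mem_span_mv v using Submodule.span_induction generalizing w with
  | mem x hx =>
      obtain ⟨Lv, rfl⟩ := hx
      induction Stmt12Aux.mem_span_mw w using Submodule.span_induction with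
      | mem y hy =>
          obtain ⟨Lw, rfl⟩ := hy
          exact Stmt12Aux.key S s t Lw Lv
      | zero => simp
      | add a b ha hb iha ihb =>
          simp only [mul_add, map_add, iha, ihb]
          abel
      | smul r a ha iha =>
          simp only [mul_smul_comm, map_smul, iha, smul_add]
  | zero => simp
  | add a b ha hb iha ihb =>
      simp only [mul_add, map_add, LinearMap.add_apply, iha, ihb]
      abel
  | smul r a ha iha =>
      simp only [mul_smul_comm, map_smul, LinearMap.smul_apply, iha, smul_add]
end
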